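/- arXiv:1801.05164 — 7 statements merged into one kernel-verified Lean document; each statement's English description precedes it below -/
import Mathlib

section
/- Let θ be an (anti-)automorphism of A*, X ⊆ A* a finite θ-invariant set, and Y the minimal generating set of the smallest θ-invariant free submonoid of A* containing X. Then every word y ∈ Y occurs as the initial factor (first letter of the unique Y-factorization) of some word of X, and also as the terminal factor of some word of X. -/
open List

/-- The submonoid of the free monoid `A*` (words as lists) generated by `S`:
all concatenations of finitely many words of `S`. -/
def wordStar {A : Type*} (S : Set (List A)) : Set (List A) :=
  {w | ∃ l : List (List A), (∀ x ∈ l, x ∈ S) ∧ l.flatten = w}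

/-- `X` is a (variable-length) code: every equation among words of `X` is trivial. -/
def isCodeL {A : Type*} (X : Set (List A)) : Prop :=
  ∀ l m : List (List A), (∀ w ∈ l, w ∈ X) → (∀ w ∈ m, w ∈ X) → l.flatten = m.flatten → l = m

/-- `θ` is an (anti-)automorphism of the free monoid `A*`: a bijection fixing the
empty word which is either a morphism or an anti-morphism. -/
def isAAA {A : Type*} (θ : List A → List A) : Prop :=
  Function.Bijective θ ∧ θ [] = [] ∧
    ((∀ u v : List A, θ (u ++ v) = θ u ++ θ v) ∨
     (∀ u v : List A, θ (u ++ v) = θ v ++ θ u))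

/-- `M` is a submonoid of the free monoid `A*`. -/
def isSubmonoidL {A : Type*} (M : Set (List A)) : Prop :=
  [] ∈ M ∧ ∀ u ∈ M, ∀ v ∈ M, u ++ v ∈ M

/-- The minimal generating set `(M∖{ε}) ∖ (M∖{ε})²` of a submonoid `M` of `A*`. -/
def mgsL {A : Type*} (M : Set (List A)) : Set (List A) :=
  (M \ {[]}) \ {w | ∃ u ∈ M \ ({[]} : Set (List A)), ∃ v ∈ M \ ({[]} : Set (List A)), w = u ++ v}

/-- `M` is a free submonoid of `A*`: it is generated by its minimal generating
set, which is a code. -/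
def isFreeSubmonoidL {A : Type*} (M : Set (List A)) : Prop :=
  isSubmonoidL M ∧ isCodeL (mgsL M) ∧ M = wordStar (mgsL M)

/-- `X` is complete: every word is a factor of some word of `X*`. -/
def isCompleteL {A : Type*} (X : Set (List A)) : Prop :=
  ∀ w : List A, ∃ u v : List A, u ++ w ++ v ∈ wordStar X

/-- `X` is a prefix code: `X ∩ XA⁺ = ∅`. -/
def isPrefixCodeL {A : Type*} (X : Set (List A)) : Prop :=
  ∀ x ∈ X, ∀ y ∈ X, x <+: y → x = y

/-- `X` is a suffix code: `X ∩ A⁺X = ∅`. -/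
def isSuffixCodeL {A : Type*} (X : Set (List A)) : Prop :=
  ∀ x ∈ X, ∀ y ∈ X, x <:+ y → x = y

section Aux
variable {A : Type*}

lemma mem_wordStar_of_mem {Z : Set (List A)} {z : List A} (h : z ∈ Z) : z ∈ wordStar Z :=
  ⟨[z], by simp [h]⟩

lemma nil_mem_wordStar (Z : Set (List A)) : [] ∈ wordStar Z := ⟨[], by simp⟩

lemma wordStar_submonoid (Z : Set (List A)) : isSubmonoidL (wordStar Z) := by
  refine ⟨nil_mem_wordStar Z, ?_⟩
  rintro u ⟨lu, hlu, rfl⟩ v ⟨lv, hlv, rfl⟩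
  refine ⟨lu ++ lv, ?_, by simp⟩
  intro x hx
  rcases mem_append.mp hx with h | h
  exacts [hlu x h, hlv x h]

lemma flatten_ne_nil {Z : Set (List A)} (hne : [] ∉ Z) {l : List (List A)}
    (hl : ∀ w ∈ l, w ∈ Z) (h0 : l ≠ []) : l.flatten ≠ [] := by
  intro h
  rw [flatten_eq_nil_iff] at h
  cases l with
  | nil => exact h0 rfl
  | cons a t =>
    have := hl a (by simp)
    rw [h a (by simp)] at this
    exact hne this

lemma mgs_wordStar {Z : Set (List A)} (hcode : isCodeL Z) (hne : [] ∉ Z) :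
    mgsL (wordStar Z) = Z := by
  ext w
  constructor
  · rintro ⟨⟨⟨l, hl, rfl⟩, hw0⟩, hnd⟩
    simp only [Set.mem_singleton_iff] at hw0
    match l, hl, hw0 with
    | [], _, hw0 => simp at hw0
    | [a], hl, _ => simpa using hl a (by simp)
    | a :: b :: t, hl, _ =>
      exfalso
      apply hnd
      refine ⟨a, ⟨mem_wordStar_of_mem (hl a (by simp)), ?_⟩,
        (b :: t).flatten, ⟨⟨b :: t, fun x hx => hl x (by simp [hx]), rfl⟩, ?_⟩, by simp⟩
      · simp only [Set.mem_singleton_iff]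
        intro h; exact hne (h ▸ hl a (by simp))
      · simp only [Set.mem_singleton_iff]
        exact flatten_ne_nil hne (fun x hx => hl x (by simp [hx])) (by simp)
  · intro hw
    have hwne : w ≠ [] := fun h => hne (h ▸ hw)
    refine ⟨⟨mem_wordStar_of_mem hw, hwne⟩, ?_⟩
    rintro ⟨u, ⟨⟨lu, hlu, rfl⟩, hu0⟩, v, ⟨⟨lv, hlv, rfl⟩, hv0⟩, huv⟩
    simp only [Set.mem_singleton_iff] at hu0 hv0
    have hlu0 : lu ≠ [] := by rintro rfl; exact hu0 rfl
    have hlv0 : lv ≠ [] := by rintro rfl; exact hv0 rfl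
    have hfl : (lu ++ lv).flatten = ([w] : List (List A)).flatten := by simp [huv]
    have heq := hcode (lu ++ lv) [w]
      (fun x hx => by rcases mem_append.mp hx with h | h; exacts [hlu x h, hlv x h])
      (by simpa using hw) hfl
    have hlen : (lu ++ lv).length = 1 := by rw [heq]; rfl
    rw [length_append] at hlen
    have h1 := length_pos_iff.mpr hlu0
    have h2 := length_pos_iff.mpr hlv0
    omega

lemma free_wordStar {Z : Set (List A)} (hcode : isCodeL Z) (hne : [] ∉ Z) :
    isFreeSubmonoidL (wordStar Z) := by
  have h := mgs_wordStar hcode hne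
  exact ⟨wordStar_submonoid Z, by rw [h]; exact hcode, by rw [h]⟩

lemma exists_map_list {B : Type*} (f : B → List A) (S : Set B) :
    ∀ l : List (List A), (∀ w ∈ l, ∃ c ∈ S, f c = w) →
      ∃ ls : List B, (∀ c ∈ ls, c ∈ S) ∧ ls.map f = l := by
  intro l
  induction l with
  | nil => exact fun _ => ⟨[], by simp, rfl⟩
  | cons a t ih =>
    intro h
    obtain ⟨c, hc, hfc⟩ := h a (by simp)
    obtain ⟨ls, hls, hmap⟩ := ih (fun w hw => h w (by simp [hw]))
    refine ⟨c :: ls, ?_, by simp [hfc, hmap]⟩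
    intro d hd
    rcases mem_cons.mp hd with rfl | hd
    exacts [hc, hls d hd]

lemma theta_flatten_mor {θ : List A → List A} (h0 : θ [] = [])
    (hm : ∀ u v : List A, θ (u ++ v) = θ u ++ θ v) :
    ∀ l : List (List A), θ l.flatten = (l.map θ).flatten := by
  intro l
  induction l with
  | nil => simpa
  | cons a t ih => simp [hm, ih]

lemma theta_flatten_anti {θ : List A → List A} (h0 : θ [] = [])
    (hm : ∀ u v : List A, θ (u ++ v) = θ v ++ θ u) :
    ∀ l : List (List A), θ l.flatten = (l.reverse.map θ).flatten := by
  intro l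
  induction l with
  | nil => simpa
  | cons a t ih => simp [hm, ih]

def chunkSet (Y I T : Set (List A)) : Set (List (List A)) :=
  {c | c ≠ [] ∧ (∀ u ∈ c, u ∈ Y) ∧ (∀ a, c.head? = some a → a ∈ I) ∧
    (∀ a, c.getLast? = some a → a ∈ T) ∧ c.Chain' (fun a b => a ∉ T ∨ b ∉ I)}

lemma chunk_pre (Y I T : Set (List A)) :
    ∀ l : List (List A), l ≠ [] → (∀ u ∈ l, u ∈ Y) → (∀ a, l.getLast? = some a → a ∈ T) →
    ∃ (c : List (List A)) (cs : List (List (List A))), c ≠ [] ∧ (∀ u ∈ c, u ∈ Y) ∧ (∀ a, c.getLast? = some a → a ∈ T) ∧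
      c.Chain' (fun a b => a ∉ T ∨ b ∉ I) ∧ (∀ d ∈ cs, d ∈ chunkSet Y I T) ∧
      c ++ cs.flatten = l ∧ c.head? = l.head? := by
  intro l
  induction l with
  | nil => intro h; exact absurd rfl h
  | cons y ys ih =>
    intro _ hY hT
    rcases eq_or_ne ys [] with rfl | hys
    · exact ⟨[y], [], by simp, hY, hT, isChain_singleton y, by simp, by simp, rfl⟩
    · obtain ⟨b, t, rfl⟩ := exists_cons_of_ne_nil hys
      have hT' : ∀ a, (b :: t).getLast? = some a → a ∈ T := by
        intro a ha; exact hT a (by rwa [getLast?_cons_cons])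
      obtain ⟨c, cs, hc0, hcY, hcT, hcch, hcs, hflat, hhead⟩ :=
        ih (by simp) (fun u hu => hY u (by simp [hu])) hT'
      cases c with
      | nil => exact absurd rfl hc0
      | cons c0 cr =>
        have hc0b : c0 = b := by simpa using hhead
        subst hc0b
        by_cases hsplit : y ∈ T ∧ c0 ∈ I
        · refine ⟨[y], (c0 :: cr) :: cs, by simp, ?_, ?_, isChain_singleton y, ?_, ?_, rfl⟩
          · intro u hu; rw [mem_singleton] at hu; exact hu ▸ hY y (by simp)
          · intro a ha
            have : a = y := by simpa using ha.symm
            exact this ▸ hsplit.1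
          · intro d hd
            rcases mem_cons.mp hd with rfl | hd
            · refine ⟨hc0, hcY, ?_, hcT, hcch⟩
              intro a ha
              have : a = c0 := by simpa using ha.symm
              exact this ▸ hsplit.2
            · exact hcs d hd
          · simpa using hflat
        · refine ⟨y :: c0 :: cr, cs, by simp, ?_, ?_, ?_, hcs, by simpa using hflat, rfl⟩
          · intro u hu
            rcases mem_cons.mp hu with rfl | hu
            · exact hY u (by simp)
            · exact hcY u hu
          · intro a ha
            rw [getLast?_cons_cons] at ha
            exact hcT a ha
          · change List.IsChain _ _
            rw [isChain_cons]
            refine ⟨?_, hcch⟩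
            intro z hz
            have : z = c0 := by simpa using hz.symm
            subst this
            tauto

lemma chunk_decomp (Y I T : Set (List A)) (l : List (List A)) (hY : ∀ u ∈ l, u ∈ Y)
    (hI : ∀ a, l.head? = some a → a ∈ I) (hT : ∀ a, l.getLast? = some a → a ∈ T) :
    ∃ cs : List (List (List A)), (∀ d ∈ cs, d ∈ chunkSet Y I T) ∧ cs.flatten = l := by
  rcases eq_or_ne l [] with rfl | h0
  · exact ⟨[], by simp, rfl⟩
  · obtain ⟨c, cs, hc0, hcY, hcT, hcch, hcs, hflat, hhead⟩ := chunk_pre Y I T l h0 hY hT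
    refine ⟨c :: cs, ?_, by simpa using hflat⟩
    intro d hd
    rcases mem_cons.mp hd with rfl | hd
    · exact ⟨hc0, hcY, fun a ha => hI a (by rw [← hhead]; exact ha), hcT, hcch⟩
    · exact hcs d hd

lemma flatten_mem_wordStar_chunks (Y I T : Set (List A)) (l : List (List A))
    (hY : ∀ u ∈ l, u ∈ Y) (hI : ∀ a, l.head? = some a → a ∈ I)
    (hT : ∀ a, l.getLast? = some a → a ∈ T) :
    l.flatten ∈ wordStar {w | ∃ c ∈ chunkSet Y I T, c.flatten = w} := by
  obtain ⟨cs, hcs, rfl⟩ := chunk_decomp Y I T l hY hI hT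
  refine ⟨cs.map flatten, ?_, flatten_flatten.symm⟩
  intro w hw
  obtain ⟨c, hc, rfl⟩ := mem_map.mp hw
  exact ⟨c, hcs c hc, rfl⟩

lemma chunks_flatten_head (Y I T : Set (List A)) :
    ∀ ls : List (List (List A)), (∀ c ∈ ls, c ∈ chunkSet Y I T) →
      (∀ a, ls.flatten.head? = some a → a ∈ I) ∧
      (∀ a, ls.flatten.getLast? = some a → a ∈ T) := by
  intro ls
  induction ls with
  | nil => intro _; constructor <;> intro a ha <;> simp at ha
  | cons c r ih =>
    intro h
    obtain ⟨hc0, hcY, hcI, hcT, _⟩ := h c (by simp)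
    obtain ⟨ihI, ihT⟩ := ih (fun d hd => h d (by simp [hd]))
    constructor
    · intro a ha
      rw [flatten_cons] at ha
      cases c with
      | nil => exact absurd rfl hc0
      | cons u c' =>
        have : a = u := by simpa using ha.symm
        exact this ▸ hcI u rfl
    · intro a ha
      rw [flatten_cons, getLast?_append] at ha
      cases hr : r.flatten.getLast? with
      | some b =>
        rw [hr] at ha
        simp only [Option.some_or] at ha
        exact ihT a (by rw [hr, ← ha])
      | none =>
        rw [hr] at ha
        simp only [Option.none_or] at ha
        exact hcT a ha

lemma chunk_flatten_uniq (Y I T : Set (List A)) :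
    ∀ ls ms : List (List (List A)), (∀ c ∈ ls, c ∈ chunkSet Y I T) →
      (∀ c ∈ ms, c ∈ chunkSet Y I T) → ls.flatten = ms.flatten → ls = ms := by
  have key : ∀ (c₁ c₂ : List (List A)) (b : List A) (a'' : List (List A))
      (ls' : List (List (List A))) (t : List (List A)),
      c₁ ≠ [] → (∀ a, c₁.getLast? = some a → a ∈ T) → c₂ ∈ chunkSet Y I T →
      c₂ = c₁ ++ b :: a'' → (∀ c ∈ ls', c ∈ chunkSet Y I T) →
      ls'.flatten = b :: (a'' ++ t) → False := by
    intro c₁ c₂ b a'' ls' t h1 hT1 hc2 hc2eq hls' hflat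
    have hbI : b ∈ I := by
      cases ls' with
      | nil => simp at hflat
      | cons c₃ r =>
        obtain ⟨h30, _, h3I, _, _⟩ := hls' c₃ (by simp)
        cases c₃ with
        | nil => exact absurd rfl h30
        | cons u c₃' =>
          have hub : u = b := by
            rw [flatten_cons] at hflat
            simpa using congrArg head? hflat
          exact hub ▸ h3I u rfl
    obtain ⟨g, hg⟩ : ∃ g, c₁.getLast? = some g :=
      Option.isSome_iff_exists.mp (getLast?_isSome.mpr h1)
    have hgT : g ∈ T := hT1 g hg
    have hch := hc2.2.2.2.2
    change List.IsChain _ _ at hch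
    rw [hc2eq, isChain_append] at hch
    have hR := hch.2.2 g hg b (by simp)
    tauto
  intro ls
  induction ls with
  | nil =>
    intro ms _ hms h
    cases ms with
    | nil => rfl
    | cons c r =>
      exfalso
      obtain ⟨h0, _, _, _, _⟩ := hms c (by simp)
      rw [flatten_cons] at h
      cases c with
      | nil => exact h0 rfl
      | cons u c' => simp at h
  | cons c₁ ls' ih =>
    intro ms hls hms h
    cases ms with
    | nil =>
      exfalso
      obtain ⟨h0, _, _, _, _⟩ := hls c₁ (by simp)
      rw [flatten_cons] at h
      cases c₁ with
      | nil => exact h0 rfl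
      | cons u c' => simp at h
    | cons c₂ ms' =>
      rw [flatten_cons, flatten_cons] at h
      obtain ⟨hc₁0, _, _, hc₁T, _⟩ := hls c₁ (by simp)
      obtain ⟨hc₂0, _, _, hc₂T, _⟩ := hms c₂ (by simp)
      rcases append_eq_append_iff.mp h with ⟨a', ha1, ha2⟩ | ⟨a', ha1, ha2⟩
      · cases a' with
        | nil =>
          rw [append_nil] at ha1
          rw [nil_append] at ha2
          have := ih ms' (fun d hd => hls d (by simp [hd])) (fun d hd => hms d (by simp [hd])) ha2
          rw [ha1, this]
        | cons b a'' =>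
          exact absurd (key c₁ c₂ b a'' ls' ms'.flatten hc₁0 hc₁T (hms c₂ (by simp)) ha1
            (fun d hd => hls d (by simp [hd])) (by simpa using ha2)) (fun hf => hf)
      · cases a' with
        | nil =>
          rw [append_nil] at ha1
          rw [nil_append] at ha2
          have := ih ms' (fun d hd => hls d (by simp [hd])) (fun d hd => hms d (by simp [hd])) ha2.symm
          rw [ha1, this]
        | cons b a'' =>
          exact absurd (key c₂ c₁ b a'' ms' ls'.flatten hc₂0 hc₂T (hls c₁ (by simp)) ha1
            (fun d hd => hms d (by simp [hd])) (by simpa using ha2)) (fun hf => hf)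

lemma chunk_code (Y I T : Set (List A)) (hYcode : isCodeL Y) :
    isCodeL {w | ∃ c ∈ chunkSet Y I T, c.flatten = w} := by
  intro l m hl hm hflat
  obtain ⟨ls, hls, rfl⟩ := exists_map_list flatten (chunkSet Y I T) l hl
  obtain ⟨ms, hms, rfl⟩ := exists_map_list flatten (chunkSet Y I T) m hm
  rw [← flatten_flatten, ← flatten_flatten] at hflat
  have hYl : ∀ u ∈ ls.flatten, u ∈ Y := by
    intro u hu
    obtain ⟨c, hc, huc⟩ := mem_flatten.mp hu
    exact (hls c hc).2.1 u huc
  have hYm : ∀ u ∈ ms.flatten, u ∈ Y := by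
    intro u hu
    obtain ⟨c, hc, huc⟩ := mem_flatten.mp hu
    exact (hms c hc).2.1 u huc
  have := hYcode ls.flatten ms.flatten hYl hYm hflat
  rw [chunk_flatten_uniq Y I T ls ms hls hms this]

end Aux


/-- Every word of the minimal generating set `Y` of the smallest θ-invariant free
submonoid containing a finite θ-invariant set `X` occurs as the initial factor,
and as the terminal factor, of the `Y`-factorization of some word of `X`. -/
theorem stmt4 {A : Type*} (θ : List A → List A) (hθ : isAAA θ)
    (X : Set (List A)) (hfin : X.Finite) (hinv : θ '' X ⊆ X)
    (M : Set (List A)) (hM : isFreeSubmonoidL M) (hMinv : θ '' M ⊆ M) (hXM : X ⊆ M)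
    (hmin : ∀ N : Set (List A), isFreeSubmonoidL N → θ '' N ⊆ N → X ⊆ N → M ⊆ N)
    (Y : Set (List A)) (hY : Y = mgsL M) :
    ∀ y ∈ Y,
      (∃ x ∈ X, ∃ l : List (List A), (∀ w ∈ l, w ∈ Y) ∧ (y :: l).flatten = x) ∧
      (∃ x ∈ X, ∃ l : List (List A), (∀ w ∈ l, w ∈ Y) ∧ (l ++ [y]).flatten = x) := by
  obtain ⟨⟨hinj, hsurj⟩, h0, hmor⟩ := hθ
  obtain ⟨hMsub, hMcode', hMeq'⟩ := hM
  have hMcode : isCodeL Y := by rw [hY]; exact hMcode'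
  have hMeq : M = wordStar Y := by rw [hY]; exact hMeq'
  have hYM : ∀ y ∈ Y, y ∈ M ∧ y ≠ [] := by
    intro y hy
    rw [hY] at hy
    exact ⟨hy.1.1, by simpa using hy.1.2⟩
  have hYne : [] ∉ Y := fun h => (hYM [] h).2 rfl
  -- θ '' M = M
  have hθM : θ '' M = M := by
    have hZn : [] ∉ θ '' Y := by
      rintro ⟨y, hy, hy2⟩
      have : y = [] := hinj (by rw [hy2, h0])
      exact hYne (this ▸ hy)
    have hZc : isCodeL (θ '' Y) := by
      intro l m hl hm hfl
      obtain ⟨ls, hls, rfl⟩ := exists_map_list θ Y l hl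
      obtain ⟨ms, hms, rfl⟩ := exists_map_list θ Y m hm
      rcases hmor with hm1 | hm2
      · rw [← theta_flatten_mor h0 hm1, ← theta_flatten_mor h0 hm1] at hfl
        rw [hMcode ls ms hls hms (hinj hfl)]
      · have e1 : (ls.map θ).flatten = θ ls.reverse.flatten := by
          rw [theta_flatten_anti h0 hm2 ls.reverse, reverse_reverse]
        have e2 : (ms.map θ).flatten = θ ms.reverse.flatten := by
          rw [theta_flatten_anti h0 hm2 ms.reverse, reverse_reverse]
        rw [e1, e2] at hfl
        have := hMcode ls.reverse ms.reverse (fun w hw => hls w (mem_reverse.mp hw))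
          (fun w hw => hms w (mem_reverse.mp hw)) (hinj hfl)
        rw [reverse_injective this]
    have hWS : θ '' M = wordStar (θ '' Y) := by
      ext w
      constructor
      · rintro ⟨m, hm, rfl⟩
        rw [hMeq] at hm
        obtain ⟨l, hl, rfl⟩ := hm
        rcases hmor with hm1 | hm2
        · exact ⟨l.map θ, fun x hx => by
            obtain ⟨u, hu, rfl⟩ := mem_map.mp hx; exact ⟨u, hl u hu, rfl⟩,
            (theta_flatten_mor h0 hm1 l).symm⟩
        · exact ⟨l.reverse.map θ, fun x hx => by
            obtain ⟨u, hu, rfl⟩ := mem_map.mp hx; exact ⟨u, hl u (mem_reverse.mp hu), rfl⟩,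
            (theta_flatten_anti h0 hm2 l).symm⟩
      · rintro ⟨l, hl, rfl⟩
        obtain ⟨ls, hls, rfl⟩ := exists_map_list θ Y l hl
        rcases hmor with hm1 | hm2
        · exact ⟨ls.flatten, by rw [hMeq]; exact ⟨ls, hls, rfl⟩, theta_flatten_mor h0 hm1 ls⟩
        · refine ⟨ls.reverse.flatten, by
            rw [hMeq]; exact ⟨ls.reverse, fun w hw => hls w (mem_reverse.mp hw), rfl⟩, ?_⟩
          rw [theta_flatten_anti h0 hm2, reverse_reverse]
    have hfree : isFreeSubmonoidL (θ '' M) := by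
      rw [hWS]; exact free_wordStar hZc hZn
    have himg : θ '' (θ '' M) ⊆ θ '' M := Set.image_mono (f := θ) hMinv
    have hXX : θ '' X = X := by
      apply Set.eq_of_subset_of_ncard_le hinv _ hfin
      rw [Set.ncard_image_of_injective _ hinj]
    have hXθM : X ⊆ θ '' M := by
      intro x hx
      rw [← hXX] at hx
      exact Set.image_mono (f := θ) hXM hx
    exact Set.Subset.antisymm hMinv (hmin _ hfree himg hXθM)
  -- θ maps Y into Y
  have hθY : ∀ y ∈ Y, θ y ∈ Y := by
    intro y hy
    obtain ⟨hyM, hyne⟩ := hYM y hy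
    rw [hY]
    refine ⟨⟨hMinv ⟨y, hyM, rfl⟩, ?_⟩, ?_⟩
    · simp only [Set.mem_singleton_iff]
      intro h; exact hyne (hinj (h.trans h0.symm))
    · rintro ⟨u, ⟨huM, hu0⟩, v, ⟨hvM, hv0⟩, huv⟩
      rw [← hθM] at huM hvM
      obtain ⟨a, haM, rfl⟩ := huM
      obtain ⟨b, hbM, rfl⟩ := hvM
      simp only [Set.mem_singleton_iff] at hu0 hv0
      have ha0 : a ≠ [] := by rintro rfl; exact hu0 h0
      have hb0 : b ≠ [] := by rintro rfl; exact hv0 h0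
      have hymgs : y ∈ mgsL M := hY ▸ hy
      apply hymgs.2
      rcases hmor with hm1 | hm2
      · exact ⟨a, ⟨haM, by simpa using ha0⟩, b, ⟨hbM, by simpa using hb0⟩,
          hinj (huv.trans (hm1 a b).symm)⟩
      · exact ⟨b, ⟨hbM, by simpa using hb0⟩, a, ⟨haM, by simpa using ha0⟩,
          hinj (huv.trans (hm2 b a).symm)⟩
  -- initial and terminal factor sets
  set I : Set (List A) :=
    {z | ∃ x ∈ X, ∃ l : List (List A), (∀ w ∈ l, w ∈ Y) ∧ (z :: l).flatten = x} with hIdef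
  set T : Set (List A) :=
    {z | ∃ x ∈ X, ∃ l : List (List A), (∀ w ∈ l, w ∈ Y) ∧ (l ++ [z]).flatten = x} with hTdef
  -- stability of I and T
  have hImor : (∀ u v : List A, θ (u ++ v) = θ u ++ θ v) → ∀ z ∈ I, θ z ∈ I := by
    intro hm1 z hz
    obtain ⟨x, hx, l, hl, hfl⟩ := hz
    refine ⟨θ x, hinv ⟨x, hx, rfl⟩, l.map θ, ?_, ?_⟩
    · intro w hw
      obtain ⟨u, hu, rfl⟩ := mem_map.mp hw
      exact hθY u (hl u hu)
    · rw [← map_cons, ← theta_flatten_mor h0 hm1, hfl]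
  have hTmor : (∀ u v : List A, θ (u ++ v) = θ u ++ θ v) → ∀ z ∈ T, θ z ∈ T := by
    intro hm1 z hz
    obtain ⟨x, hx, l, hl, hfl⟩ := hz
    refine ⟨θ x, hinv ⟨x, hx, rfl⟩, l.map θ, ?_, ?_⟩
    · intro w hw
      obtain ⟨u, hu, rfl⟩ := mem_map.mp hw
      exact hθY u (hl u hu)
    · have : (l.map θ ++ [θ z]) = (l ++ [z]).map θ := by simp
      rw [this, ← theta_flatten_mor h0 hm1, hfl]
  have hIanti : (∀ u v : List A, θ (u ++ v) = θ v ++ θ u) → ∀ z ∈ I, θ z ∈ T := by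
    intro hm2 z hz
    obtain ⟨x, hx, l, hl, hfl⟩ := hz
    refine ⟨θ x, hinv ⟨x, hx, rfl⟩, l.reverse.map θ, ?_, ?_⟩
    · intro w hw
      obtain ⟨u, hu, rfl⟩ := mem_map.mp hw
      exact hθY u (hl u (mem_reverse.mp hu))
    · have : (l.reverse.map θ ++ [θ z]) = (z :: l).reverse.map θ := by simp
      rw [this, ← theta_flatten_anti h0 hm2, hfl]
  have hTanti : (∀ u v : List A, θ (u ++ v) = θ v ++ θ u) → ∀ z ∈ T, θ z ∈ I := by
    intro hm2 z hz
    obtain ⟨x, hx, l, hl, hfl⟩ := hz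
    refine ⟨θ x, hinv ⟨x, hx, rfl⟩, l.reverse.map θ, ?_, ?_⟩
    · intro w hw
      obtain ⟨u, hu, rfl⟩ := mem_map.mp hw
      exact hθY u (hl u (mem_reverse.mp hu))
    · have : (θ z :: l.reverse.map θ) = (l ++ [z]).reverse.map θ := by simp
      rw [this, ← theta_flatten_anti h0 hm2, hfl]
  -- the invariant free submonoid N = (chunks)*
  set Z : Set (List A) := {w | ∃ c ∈ chunkSet Y I T, c.flatten = w} with hZdef
  have hZne : [] ∉ Z := by
    rintro ⟨c, hc, hfl⟩
    exact flatten_ne_nil hYne hc.2.1 hc.1 hfl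
  have hZcode : isCodeL Z := chunk_code Y I T hMcode
  have hNfree : isFreeSubmonoidL (wordStar Z) := free_wordStar hZcode hZne
  have hmemN : ∀ l : List (List A), (∀ u ∈ l, u ∈ Y) → (∀ a, l.head? = some a → a ∈ I) →
      (∀ a, l.getLast? = some a → a ∈ T) → l.flatten ∈ wordStar Z :=
    fun l h1 h2 h3 => flatten_mem_wordStar_chunks Y I T l h1 h2 h3
  have hXN : X ⊆ wordStar Z := by
    intro x hx
    have hxM := hXM hx
    rw [hMeq] at hxM
    obtain ⟨l, hl, rfl⟩ := hxM
    apply hmemN l hl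
    · intro a ha
      cases l with
      | nil => simp at ha
      | cons u t =>
        have : a = u := by simpa using ha.symm
        subst this
        exact ⟨_, hx, t, fun w hw => hl w (by simp [hw]), rfl⟩
    · intro a ha
      obtain ⟨t, rfl⟩ := getLast?_eq_some_iff.mp ha
      exact ⟨_, hx, t, fun w hw => hl w (by simp [hw]), rfl⟩
  have hNinv : θ '' wordStar Z ⊆ wordStar Z := by
    rintro _ ⟨w, hw, rfl⟩
    obtain ⟨lz, hlz, rfl⟩ := hw
    obtain ⟨ls, hls, rfl⟩ := exists_map_list flatten (chunkSet Y I T) lz hlz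
    rw [← flatten_flatten]
    have hlY : ∀ u ∈ ls.flatten, u ∈ Y := by
      intro u hu
      obtain ⟨c, hc, huc⟩ := mem_flatten.mp hu
      exact (hls c hc).2.1 u huc
    obtain ⟨hlI, hlT⟩ := chunks_flatten_head Y I T ls hls
    rcases hmor with hm1 | hm2
    · rw [theta_flatten_mor h0 hm1]
      apply hmemN
      · intro u hu
        obtain ⟨v, hv, rfl⟩ := mem_map.mp hu
        exact hθY v (hlY v hv)
      · intro a ha
        rw [head?_map] at ha
        cases hh : ls.flatten.head? with
        | none => rw [hh] at ha; simp at ha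
        | some b =>
          rw [hh] at ha
          have : a = θ b := by simpa using ha.symm
          exact this ▸ hImor hm1 b (hlI b hh)
      · intro a ha
        rw [getLast?_map] at ha
        cases hh : ls.flatten.getLast? with
        | none => rw [hh] at ha; simp at ha
        | some b =>
          rw [hh] at ha
          have : a = θ b := by simpa using ha.symm
          exact this ▸ hTmor hm1 b (hlT b hh)
    · rw [theta_flatten_anti h0 hm2]
      apply hmemN
      · intro u hu
        obtain ⟨v, hv, rfl⟩ := mem_map.mp hu
        exact hθY v (hlY v (mem_reverse.mp hv))
      · intro a ha
        rw [head?_map, head?_reverse] at ha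
        cases hh : ls.flatten.getLast? with
        | none => rw [hh] at ha; simp at ha
        | some b =>
          rw [hh] at ha
          have : a = θ b := by simpa using ha.symm
          exact this ▸ hTanti hm2 b (hlT b hh)
      · intro a ha
        rw [getLast?_map, getLast?_reverse] at ha
        cases hh : ls.flatten.head? with
        | none => rw [hh] at ha; simp at ha
        | some b =>
          rw [hh] at ha
          have : a = θ b := by simpa using ha.symm
          exact this ▸ hIanti hm2 b (hlI b hh)
  have hMN : M ⊆ wordStar Z := hmin _ hNfree hNinv hXN
  -- conclude
  intro y hy
  obtain ⟨hyM, hyne⟩ := hYM y hy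
  obtain ⟨lz, hlz, hfl⟩ := hMN hyM
  obtain ⟨ls, hls, rfl⟩ := exists_map_list flatten (chunkSet Y I T) lz hlz
  rw [← flatten_flatten] at hfl
  have hYl : ∀ u ∈ ls.flatten, u ∈ Y := by
    intro u hu
    obtain ⟨c, hc, huc⟩ := mem_flatten.mp hu
    exact (hls c hc).2.1 u huc
  have heq : ls.flatten = [y] :=
    hMcode ls.flatten [y] hYl (by simpa using hy) (by simpa using hfl)
  obtain ⟨hI', hT'⟩ := chunks_flatten_head Y I T ls hls
  rw [heq] at hI' hT'
  have hyI : y ∈ I := hI' y rfl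
  have hyT : y ∈ T := hT' y (by simp)
  rw [hIdef] at hyI
  rw [hTdef] at hyT
  exact ⟨hyI, hyT⟩
end

section
/- Let A be a finite alphabet and θ an (anti-)automorphism of A*. If X ⊆ A* is a finite complete code, then for every letter a ∈ A there exists a unique positive integer p with a^p ∈ X. -/
open List

lemma take_rep_append {A : Type*} (a : A) (N k : ℕ) (v : List A) (hk : k ≤ N) :
    (List.replicate N a ++ v).take k = List.replicate k a := by
  rw [List.take_append, List.take_replicate, min_eq_left hk,
    List.length_replicate, Nat.sub_eq_zero_of_le hk, List.take_zero, List.append_nil]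

lemma drop_rep_append {A : Type*} (a : A) (N k : ℕ) (v : List A) (hk : k ≤ N) :
    (List.replicate N a ++ v).drop k = List.replicate (N - k) a ++ v := by
  rw [List.drop_append, List.drop_replicate, List.length_replicate,
    Nat.sub_eq_zero_of_le hk, List.drop_zero]

lemma key_lemma {A : Type*} (a : A) (L : ℕ) :
    ∀ (l : List (List A)) (u v : List A) (N : ℕ),
      (∀ x ∈ l, x ≠ [] ∧ x.length ≤ L) → 2 * L + 1 ≤ N →
      l.flatten = u ++ List.replicate N a ++ v →
      ∃ x ∈ l, ∃ p, 0 < p ∧ x = List.replicate p a := by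
  intro l
  induction l with
  | nil =>
    intro u v N _ hN h
    exfalso
    have := congrArg List.length h
    simp at this
    omega
  | cons x t ih =>
    intro u v N hmem hN h
    obtain ⟨hxne, hxL⟩ := hmem x (List.mem_cons_self ..)
    by_cases hxu : x.length ≤ u.length
    · -- x is a prefix of u; recurse
      have ht : t.flatten = u.drop x.length ++ List.replicate N a ++ v := by
        have h' := congrArg (List.drop x.length) h
        rw [List.flatten_cons, List.drop_append, List.drop_length,
          Nat.sub_self, List.drop_zero, List.nil_append, List.append_assoc,
          List.drop_append, Nat.sub_eq_zero_of_le hxu, List.drop_zero,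
          ← List.append_assoc] at h'
        exact h'
      obtain ⟨y, hy, p, hp⟩ := ih (u.drop x.length) v N
        (fun y hy => hmem y (List.mem_cons_of_mem _ hy)) hN ht
      exact ⟨y, List.mem_cons_of_mem _ hy, p, hp⟩
    · push_neg at hxu
      set k := x.length - u.length with hkdef
      have hkN : k ≤ N := by omega
      have hxval : x = u ++ List.replicate k a := by
        have h' := congrArg (List.take x.length) h
        rw [List.flatten_cons, List.take_append, List.take_length,
          Nat.sub_self, List.take_zero, List.append_nil, List.append_assoc,
          List.take_append, List.take_of_length_le (le_of_lt hxu),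
          take_rep_append a N _ v (by omega)] at h'
        exact h'
      rcases eq_or_ne u [] with hu | hu
      · refine ⟨x, List.mem_cons_self .., k, ?_, by simpa [hu] using hxval⟩
        have h1 : x.length = u.length + k := by
          have := congrArg List.length hxval
          simp at this
          omega
        have h2 : x.length ≠ 0 := by simpa using hxne
        have h3 : u.length = 0 := by simp [hu]
        omega
      · -- u nonempty; look at the head of t
        have hu1 : 1 ≤ u.length := List.length_pos_iff.mpr hu
        have ht : t.flatten = List.replicate (N - k) a ++ v := by
          have h' := congrArg (List.drop x.length) h
          rw [List.flatten_cons, List.drop_append, List.drop_length,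
            Nat.sub_self, List.drop_zero, List.nil_append, List.append_assoc,
            List.drop_append, List.drop_of_length_le (le_of_lt hxu),
            drop_rep_append a N _ v (by omega), List.nil_append] at h'
          exact h'
        match t with
        | [] =>
          exfalso
          have := congrArg List.length ht
          simp at this
          omega
        | y :: t' =>
          obtain ⟨hyne, hyL⟩ := hmem y (List.mem_cons_of_mem _ (List.mem_cons_self ..))
          have hyval : y = List.replicate y.length a := by
            have h' := congrArg (List.take y.length) ht
            rw [List.flatten_cons, List.take_append, List.take_length,
              Nat.sub_self, List.take_zero, List.append_nil,
              take_rep_append a (N - k) _ v (by omega)] at h'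
            exact h'
          refine ⟨y, List.mem_cons_of_mem _ (List.mem_cons_self ..), y.length, ?_, hyval⟩
          have : y.length ≠ 0 := by simpa using hyne
          omega

lemma flatten_rep_rep {A : Type*} (a : A) (p : ℕ) :
    ∀ n, (List.replicate n (List.replicate p a)).flatten = List.replicate (n * p) a := by
  intro n
  induction n with
  | zero => simp
  | succ n ih =>
    rw [List.replicate_succ, List.flatten_cons, ih, ← List.replicate_add]
    congr 1
    ring

/-- Over a finite alphabet, a finite complete code contains exactly one power of
each letter. -/
theorem stmt6 {A : Type*} [Finite A] (X : Set (List A)) (hfin : X.Finite)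
    (hcode : isCodeL X) (hcomp : isCompleteL X) :
    ∀ a : A, ∃! p : ℕ, 0 < p ∧ List.replicate p a ∈ X := by
  intro a
  -- the empty word is not in X
  have hnil : [] ∉ X := by
    intro h
    have := hcode [[]] [] (by simpa using h) (by simp) (by simp)
    simp at this
  -- a uniform length bound
  set L : ℕ := hfin.toFinset.sup List.length with hL
  have hbound : ∀ x ∈ X, x.length ≤ L := by
    intro x hx
    exact Finset.le_sup (f := List.length) (hfin.mem_toFinset.mpr hx)
  -- existence
  obtain ⟨u, v, l, hlX, hlf⟩ := hcomp (List.replicate (2 * L + 1) a)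
  obtain ⟨x, hxl, p, hp, hxval⟩ := key_lemma a L l u v (2 * L + 1)
    (fun x hx => ⟨fun h => hnil (h ▸ hlX x hx), hbound x (hlX x hx)⟩) le_rfl hlf
  have hxX : List.replicate p a ∈ X := hxval ▸ hlX x hxl
  refine ⟨p, ⟨hp, hxX⟩, ?_⟩
  -- uniqueness
  rintro q ⟨hq, hqX⟩
  have := hcode (List.replicate p (List.replicate q a)) (List.replicate q (List.replicate p a))
    (fun w hw => by rw [List.eq_of_mem_replicate hw]; exact hqX)
    (fun w hw => by rw [List.eq_of_mem_replicate hw]; exact hxX)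
    (by rw [flatten_rep_rep, flatten_rep_rep, Nat.mul_comm])
  have hlen := congrArg List.length this
  simp at hlen
  omega
end

section
/- Let A = {a,b} and let θ be the automorphism of A* exchanging a and b. For every integer n ≥ 3, the set X = ⋃_{1≤i≤n−1} {aⁱb, bⁱa} ∪ {aⁿ, bⁿ} is a complete prefix code which is θ-invariant, and X is not suffix. -/
open List

namespace Stmt9Aux
open List

def Xn (n : ℕ) : Set (List Bool) :=
  {w | ∃ i, 1 ≤ i ∧ i ≤ n - 1 ∧
      (w = List.replicate i true ++ [false] ∨ w = List.replicate i false ++ [true])}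
    ∪ {List.replicate n true, List.replicate n false}

lemma wordStar_nil {A : Type*} (S : Set (List A)) : ([] : List A) ∈ wordStar S :=
  ⟨[], by simp, rfl⟩

lemma wordStar_cons {A : Type*} {S : Set (List A)} {x w : List A}
    (hx : x ∈ S) (hw : w ∈ wordStar S) : x ++ w ∈ wordStar S := by
  obtain ⟨l, hl, hfl⟩ := hw
  refine ⟨x :: l, ?_, by simp [hfl]⟩
  intro y hy
  rcases mem_cons.1 hy with rfl | hy
  · exact hx
  · exact hl y hy

lemma wordStar_single {A : Type*} {S : Set (List A)} {x : List A} (hx : x ∈ S) :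
    x ∈ wordStar S := by
  simpa using wordStar_cons hx (wordStar_nil S)

lemma mem_Xn {n : ℕ} (hn : 3 ≤ n) {w : List Bool} :
    w ∈ Xn n ↔ ∃ i c d, w = replicate i c ++ [d] ∧ 1 ≤ i ∧ i ≤ n - 1 ∧ (d = c → i = n - 1) := by
  have hrep : ∀ c : Bool, replicate n c = replicate (n-1) c ++ [c] := by
    intro c
    conv_lhs => rw [show n = (n-1)+1 by omega]
    exact replicate_succ'
  constructor
  · rintro (⟨i, h1, h2, (rfl | rfl)⟩ | h)
    · exact ⟨i, true, false, rfl, h1, h2, by simp⟩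
    · exact ⟨i, false, true, rfl, h1, h2, by simp⟩
    · rcases h with rfl | rfl
      · exact ⟨n-1, true, true, hrep true, by omega, le_refl _, fun _ => rfl⟩
      · exact ⟨n-1, false, false, hrep false, by omega, le_refl _, fun _ => rfl⟩
  · rintro ⟨i, c, d, rfl, h1, h2, h3⟩
    by_cases hdc : d = c
    · subst hdc
      right
      rw [h3 rfl, ← hrep]
      cases d
      · right; rfl
      · left; rfl
    · left
      cases c <;> cases d <;> simp at hdc ⊢ <;> exact ⟨h1, h2⟩

lemma rep_mem {n : ℕ} (hn : 3 ≤ n) (c : Bool) : replicate n c ∈ Xn n := by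
  cases c
  · exact Or.inr (Or.inr rfl)
  · exact Or.inr (Or.inl rfl)

lemma word_mem {n : ℕ} (hn : 3 ≤ n) (c : Bool) (r : ℕ) (h1 : 1 ≤ r) (h2 : r ≤ n - 1) :
    replicate r c ++ [!c] ∈ Xn n := by
  rw [mem_Xn hn]
  exact ⟨r, c, !c, rfl, h1, h2, by cases c <;> simp⟩

lemma nil_not_mem {n : ℕ} (hn : 3 ≤ n) : ([] : List Bool) ∉ Xn n := by
  rw [mem_Xn hn]
  rintro ⟨i, c, d, h, -⟩
  simpa using congrArg List.length h

lemma pref_rep : ∀ (j i : ℕ) (c d d' : Bool),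
    replicate i c ++ [d] <+: replicate j c ++ [d'] →
    (i = j ∧ d = d') ∨ (i < j ∧ d = c) := by
  intro j
  induction j with
  | zero =>
    intro i c d d' h
    have hl := h.length_le
    simp at hl
    subst hl
    obtain ⟨t, ht⟩ := h
    simp at ht
    exact Or.inl ⟨rfl, ht.1⟩
  | succ j ih =>
    intro i c d d' h
    rw [replicate_succ, cons_append] at h
    cases i with
    | zero =>
      obtain ⟨t, ht⟩ := h
      simp at ht
      exact Or.inr ⟨by omega, ht.1⟩
    | succ i =>
      rw [replicate_succ, cons_append, cons_prefix_cons] at h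
      rcases ih i c d d' h.2 with ⟨rfl, rfl⟩ | ⟨hlt, rfl⟩
      · exact Or.inl ⟨rfl, rfl⟩
      · exact Or.inr ⟨by omega, rfl⟩

lemma prefixXn {n : ℕ} (hn : 3 ≤ n) : isPrefixCodeL (Xn n) := by
  intro x hx y hy hpre
  obtain ⟨i, c, d, rfl, hi1, hi2, hic⟩ := (mem_Xn hn).1 hx
  obtain ⟨j, c', d', rfl, hj1, hj2, hjc⟩ := (mem_Xn hn).1 hy
  obtain ⟨i, rfl⟩ : ∃ i', i = i' + 1 := ⟨i - 1, by omega⟩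
  obtain ⟨j, rfl⟩ : ∃ j', j = j' + 1 := ⟨j - 1, by omega⟩
  rw [replicate_succ, cons_append, replicate_succ, cons_append, cons_prefix_cons] at hpre
  obtain ⟨rfl, hpre⟩ := hpre
  rcases pref_rep j i c d d' hpre with ⟨rfl, rfl⟩ | ⟨hlt, rfl⟩
  · rfl
  · exact absurd (hic rfl) (by omega)

lemma code_of_prefix {A : Type*} {X : Set (List A)} (h0 : ([] : List A) ∉ X)
    (hp : isPrefixCodeL X) : isCodeL X := by
  intro l
  induction l with
  | nil =>
    intro m _ hm hfl
    cases m with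
    | nil => rfl
    | cons y m =>
      exfalso
      simp only [flatten_nil, flatten_cons] at hfl
      have := List.append_eq_nil_iff.1 hfl.symm
      exact h0 (this.1 ▸ hm y (by simp))
  | cons x l ih =>
    intro m hl hm hfl
    cases m with
    | nil =>
      exfalso
      simp only [flatten_nil, flatten_cons] at hfl
      have := List.append_eq_nil_iff.1 hfl
      exact h0 (this.1 ▸ hl x (by simp))
    | cons y m =>
      simp only [flatten_cons] at hfl
      have hxy : x = y := by
        have h1 : x <+: y ++ m.flatten := ⟨l.flatten, hfl⟩
        have h2 : y <+: y ++ m.flatten := ⟨m.flatten, rfl⟩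
        rcases List.prefix_or_prefix_of_prefix h1 h2 with h | h
        · exact hp x (hl x (by simp)) y (hm y (by simp)) h
        · exact (hp y (hm y (by simp)) x (hl x (by simp)) h).symm
      subst hxy
      have hfl' : l.flatten = m.flatten := List.append_cancel_left hfl
      rw [ih m (fun w hw => hl w (mem_cons_of_mem _ hw)) (fun w hw => hm w (mem_cons_of_mem _ hw)) hfl']

lemma run_decomp : ∀ w : List Bool, w ≠ [] →
    ∃ (r : ℕ) (c : Bool) (t : List Bool), w = replicate r c ++ t ∧ 1 ≤ r ∧
      (t = [] ∨ ∃ t', t = (!c) :: t') := by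
  intro w
  induction w with
  | nil => simp
  | cons a w ih =>
    intro _
    cases w with
    | nil => exact ⟨1, a, [], by simp, le_refl 1, Or.inl rfl⟩
    | cons b w' =>
      obtain ⟨r, c, t, heq, hr, ht⟩ := ih (by simp)
      have hc : b = c := by
        obtain ⟨r', rfl⟩ : ∃ r', r = r' + 1 := ⟨r - 1, by omega⟩
        simpa [replicate_succ] using congrArg List.head? heq
      subst hc
      by_cases hab : a = b
      · subst hab
        exact ⟨r + 1, a, t, by simp [replicate_succ, heq], by omega, ht⟩
      · have ha : a = !b := by cases a <;> cases b <;> simp_all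
        refine ⟨1, a, b :: w', by simp [replicate_succ], le_refl 1, Or.inr ⟨w', ?_⟩⟩
        rw [ha]
        simp

lemma ext_to_star {n : ℕ} (hn : 3 ≤ n) : ∀ N, ∀ w : List Bool, w.length ≤ N →
    ∃ v, w ++ v ∈ wordStar (Xn n) := by
  intro N
  induction N with
  | zero =>
    intro w hw
    have : w = [] := by simpa using List.length_eq_zero_iff.1 (by omega)
    subst this
    exact ⟨[], by simpa using wordStar_nil _⟩
  | succ N ih =>
    intro w hw
    rcases eq_or_ne w [] with rfl | hne
    · exact ⟨[], by simpa using wordStar_nil _⟩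
    obtain ⟨r, c, t, rfl, hr, ht⟩ := run_decomp w hne
    by_cases hrn : n ≤ r
    · have hsplit : replicate r c ++ t = replicate n c ++ (replicate (r - n) c ++ t) := by
        rw [← append_assoc, ← replicate_add]
        congr 2
        omega
      obtain ⟨v, hv⟩ := ih (replicate (r - n) c ++ t) (by
        simp only [length_append, length_replicate] at hw ⊢
        omega)
      refine ⟨v, ?_⟩
      rw [hsplit, append_assoc]
      exact wordStar_cons (rep_mem hn c) hv
    · rcases ht with rfl | ⟨t', rfl⟩
      · refine ⟨replicate (n - r) c, ?_⟩
        have : (replicate r c ++ []) ++ replicate (n - r) c = replicate n c := by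
          rw [append_nil, ← replicate_add]
          congr 1
          omega
        rw [this]
        exact wordStar_single (rep_mem hn c)
      · obtain ⟨v, hv⟩ := ih t' (by
          simp only [length_append, length_replicate, length_cons] at hw ⊢
          omega)
        refine ⟨v, ?_⟩
        have heq : (replicate r c ++ (!c) :: t') ++ v = (replicate r c ++ [!c]) ++ (t' ++ v) := by
          simp
        rw [heq]
        exact wordStar_cons (word_mem hn c r hr (by omega)) hv

end Stmt9Aux

/-- Over `A = {a, b}` (here `a = true`, `b = false`) with θ the automorphism
exchanging the two letters, for every `n ≥ 3` the set
`X = ⋃_{1≤i≤n-1} {aⁱb, bⁱa} ∪ {aⁿ, bⁿ}` is a complete prefix θ-invariant code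
which is not suffix. -/

theorem stmt9 (n : ℕ) (hn : 3 ≤ n)
    (θ : List Bool → List Bool) (hθ : θ = fun w => w.map (fun c => !c))
    (X : Set (List Bool))
    (hX : X = {w | ∃ i, 1 ≤ i ∧ i ≤ n - 1 ∧
          (w = List.replicate i true ++ [false] ∨ w = List.replicate i false ++ [true])}
        ∪ {List.replicate n true, List.replicate n false}) :
    isCodeL X ∧ isPrefixCodeL X ∧ isCompleteL X ∧ θ '' X ⊆ X ∧ ¬ isSuffixCodeL X := by
  subst hX hθ
  have hXeq : ({w | ∃ i, 1 ≤ i ∧ i ≤ n - 1 ∧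
          (w = List.replicate i true ++ [false] ∨ w = List.replicate i false ++ [true])}
        ∪ {List.replicate n true, List.replicate n false} : Set (List Bool)) = Stmt9Aux.Xn n := rfl
  rw [hXeq]
  refine ⟨Stmt9Aux.code_of_prefix (Stmt9Aux.nil_not_mem hn) (Stmt9Aux.prefixXn hn),
    Stmt9Aux.prefixXn hn, ?_, ?_, ?_⟩
  · intro w
    obtain ⟨v, hv⟩ := Stmt9Aux.ext_to_star hn w.length w le_rfl
    exact ⟨[], v, by simpa using hv⟩
  · rintro w ⟨x, hx, rfl⟩
    obtain ⟨i, c, d, rfl, h1, h2, h3⟩ := (Stmt9Aux.mem_Xn hn).1 hx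
    rw [Stmt9Aux.mem_Xn hn]
    refine ⟨i, !c, !d, by simp, h1, h2, fun h => h3 (by simpa using h)⟩
  · intro h
    have h1 : [true, false] ∈ Stmt9Aux.Xn n := by
      rw [Stmt9Aux.mem_Xn hn]
      exact ⟨1, true, false, by simp [List.replicate_succ], le_rfl, by omega, by simp⟩
    have h2 : [true, true, false] ∈ Stmt9Aux.Xn n := by
      rw [Stmt9Aux.mem_Xn hn]
      exact ⟨2, true, false, by simp [List.replicate_succ], by omega, by omega, by simp⟩
    have := h _ h1 _ h2 ⟨[true], rfl⟩
    simp at this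
end

section
/- Let A = {a,b} and let θ be the anti-automorphism of A* exchanging a and b. For n = 2k+1 with k ≥ 1, the set X = (Aⁿ ∖ (A a^k b^k ∪ a^k b^k A)) ∪ {a^k b^k} ∪ A a^k b^k A is a finite non-uniform complete bifix code which is θ-invariant. -/
open List

namespace Stmt10Aux

lemma empty_mem_star {A : Type*} (X : Set (List A)) : [] ∈ wordStar X :=
  ⟨[], by simp, rfl⟩

lemma cons_mem_star {A : Type*} {X : Set (List A)} {x w : List A}
    (hx : x ∈ X) (hw : w ∈ wordStar X) : x ++ w ∈ wordStar X := by
  obtain ⟨l, hl, rfl⟩ := hw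
  exact ⟨x :: l, by simpa using ⟨hx, hl⟩, rfl⟩

lemma single_mem_star {A : Type*} {X : Set (List A)} {x : List A}
    (hx : x ∈ X) : x ∈ wordStar X := by
  simpa using cons_mem_star hx (empty_mem_star X)

lemma code_of_prefixCode {A : Type*} {X : Set (List A)} (h0 : [] ∉ X)
    (hp : isPrefixCodeL X) : isCodeL X := by
  intro l
  induction l with
  | nil =>
    intro m _ hm heq
    cases m with
    | nil => rfl
    | cons y m' =>
      exfalso
      have hy := hm y (by simp)
      have h : y ++ m'.flatten = [] := by simpa using heq.symm
      rcases List.append_eq_nil_iff.mp h with ⟨rfl, -⟩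
      exact h0 hy
  | cons x l' ih =>
    intro m hl hm heq
    cases m with
    | nil =>
      exfalso
      have hx := hl x (by simp)
      have h : x ++ l'.flatten = [] := by simpa using heq
      rcases List.append_eq_nil_iff.mp h with ⟨rfl, -⟩
      exact h0 hx
    | cons y m' =>
      have hx := hl x (by simp)
      have hy := hm y (by simp)
      have heq' : x ++ l'.flatten = y ++ m'.flatten := by simpa using heq
      have hxy : x = y := by
        have h1 : x <+: y ++ m'.flatten := heq' ▸ List.prefix_append x l'.flatten
        have h2 : y <+: y ++ m'.flatten := List.prefix_append y m'.flatten
        rcases List.prefix_or_prefix_of_prefix h1 h2 with h | h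
        · exact hp x hx y hy h
        · exact (hp y hy x hx h).symm
      subst hxy
      have hfl : l'.flatten = m'.flatten := List.append_cancel_left heq'
      rw [ih m' (fun w hw => hl w (by simp [hw])) (fun w hw => hm w (by simp [hw])) hfl]

end Stmt10Aux

open Stmt10Aux in
/-- Over `A = {a, b}` (here `a = true`, `b = false`) with θ the anti-automorphism
exchanging the letters, for `n = 2k+1`, `k ≥ 1`, the set
`X = (Aⁿ ∖ (A aᵏbᵏ ∪ aᵏbᵏ A)) ∪ {aᵏbᵏ} ∪ A aᵏbᵏ A` is a finite non-uniform
complete bifix θ-invariant code. -/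
theorem stmt10 (k : ℕ) (hk : 1 ≤ k) (n : ℕ) (hn : n = 2 * k + 1)
    (θ : List Bool → List Bool) (hθ : θ = fun w => (w.reverse).map (fun c => !c))
    (w₀ : List Bool) (hw₀ : w₀ = List.replicate k true ++ List.replicate k false)
    (X : Set (List Bool))
    (hX : X = ({w | w.length = n} \
          ({w | ∃ c : Bool, w = c :: w₀} ∪ {w | ∃ c : Bool, w = w₀ ++ [c]}))
        ∪ {w₀} ∪ {w | ∃ c d : Bool, w = c :: (w₀ ++ [d])}) :
    X.Finite ∧ (¬ ∃ m : ℕ, ∀ w ∈ X, w.length = m) ∧ isCodeL X ∧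
    isPrefixCodeL X ∧ isSuffixCodeL X ∧ isCompleteL X ∧ θ '' X ⊆ X := by
  obtain ⟨k', rfl⟩ : ∃ k', k = k' + 1 := ⟨k - 1, by omega⟩
  subst hn
  set K : ℕ := 2 * (k' + 1) with hK
  -- basic facts about w₀
  have hlen0 : w₀.length = K := by simp [hw₀, hK]; omega
  have hct : w₀.count true = k' + 1 := by simp [hw₀, List.count_replicate]
  have hcf : w₀.count false = k' + 1 := by simp [hw₀, List.count_replicate]
  have hrev : w₀.reverse = replicate (k' + 1) false ++ replicate (k' + 1) true := by
    simp [hw₀]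
  have htk : w₀.take (2 * k' + 1) = replicate (k' + 1) true ++ replicate k' false := by
    rw [hw₀, show 2 * k' + 1 = (replicate (k' + 1) (true : Bool)).length + k' by simp; omega,
      List.take_append, List.take_replicate]
    congr 2
    simp only [List.length_replicate]; omega
    rw [Nat.add_sub_cancel_left, List.take_replicate]; congr 1; omega
  have hmem : ∀ w : List Bool, w ∈ X ↔
      (w.length = K + 1 ∧ (¬ ∃ c, w = c :: w₀) ∧ (¬ ∃ c, w = w₀ ++ [c]))
      ∨ w = w₀ ∨ (∃ c d : Bool, w = c :: (w₀ ++ [d])) := by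
    intro w
    subst hX
    simp only [Set.mem_union, Set.mem_diff, Set.mem_setOf_eq, Set.mem_singleton_iff, hK]
    tauto
  have w0X : w₀ ∈ X := (hmem w₀).mpr (Or.inr (Or.inl rfl))
  have S3X : ∀ c d : Bool, (c :: (w₀ ++ [d])) ∈ X :=
    fun c d => (hmem _).mpr (Or.inr (Or.inr ⟨c, d, rfl⟩))
  have hlens : ∀ w ∈ X, w.length = K ∨ w.length = K + 1 ∨ w.length = K + 2 := by
    intro w hw
    rcases (hmem w).mp hw with ⟨h, -⟩ | rfl | ⟨c, d, rfl⟩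
    · tauto
    · tauto
    · right; right; simp [hlen0]
  -- θ basics
  have hθanti : ∀ u v : List Bool, θ (u ++ v) = θ v ++ θ u := by
    intro u v; simp [hθ]
  have hθw0 : θ w₀ = w₀ := by
    simp [hθ, hrev, hw₀]
  have hθinv : ∀ w, θ (θ w) = w := by
    intro w
    simp [hθ, List.map_reverse, List.reverse_reverse, List.map_map, Function.comp_def,
      Bool.not_not]
  have hθlen : ∀ w : List Bool, (θ w).length = w.length := by intro w; simp [hθ]
  have hθsingle : ∀ c : Bool, θ [c] = [!c] := by intro c; simp [hθ]
  -- θ-invariance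
  have hθX : θ '' X ⊆ X := by
    rintro _ ⟨u, hu, rfl⟩
    rcases (hmem u).mp hu with ⟨h1, h2, h3⟩ | rfl | ⟨c, d, rfl⟩
    · refine (hmem _).mpr (Or.inl ⟨by rw [hθlen, h1], ?_, ?_⟩)
      · rintro ⟨c, hc⟩
        refine h3 ⟨!c, ?_⟩
        have h := congrArg θ hc
        rw [hθinv, show c :: w₀ = [c] ++ w₀ by rfl, hθanti, hθw0, hθsingle] at h
        exact h
      · rintro ⟨c, hc⟩
        refine h2 ⟨!c, ?_⟩
        have h := congrArg θ hc
        rw [hθinv, hθanti, hθw0, hθsingle] at h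
        exact h
    · exact (hmem _).mpr (Or.inr (Or.inl hθw0))
    · refine (hmem _).mpr (Or.inr (Or.inr ⟨!d, !c, ?_⟩))
      rw [show c :: (w₀ ++ [d]) = [c] ++ (w₀ ++ [d]) by rfl, hθanti, hθanti, hθw0, hθsingle,
        hθsingle]
      simp
  -- prefix code
  have hpc : isPrefixCodeL X := by
    intro x hx y hy hpre
    have hlenle := hpre.length_le
    have htake := List.prefix_iff_eq_take.mp hpre
    rcases (hmem x).mp hx with ⟨hx1, hx2, hx3⟩ | hxw0 | ⟨c, d, rfl⟩ <;>
      [skip; subst hxw0; skip] <;>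
      rcases (hmem y).mp hy with ⟨hy1, hy2, hy3⟩ | hyw | ⟨c', d', hy'⟩
    · exact hpre.eq_of_length (by omega)
    · exfalso; rw [hyw, hlen0] at hlenle; omega
    · exfalso
      subst hy'
      rw [hx1, List.take_succ_cons, ← hlen0, List.take_left] at htake
      exact hx2 ⟨c', htake⟩
    · exfalso
      obtain ⟨t, rfl⟩ := hpre
      rw [List.length_append, hlen0] at hy1
      obtain ⟨e, rfl⟩ := List.length_eq_one_iff.mp (by omega : t.length = 1)
      exact hy3 ⟨e, rfl⟩
    · exact hyw.symm
    · exfalso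
      subst hy'
      rw [hlen0, show K = (2 * k' + 1) + 1 by omega, List.take_succ_cons,
        List.take_append_of_le_length (hlen0.symm ▸ (show 2 * k' + 1 ≤ K by omega)),
        htk] at htake
      cases c' with
      | true =>
        have h := congrArg (List.count true) htake
        simp [List.count_cons, List.count_append, List.count_replicate, hct] at h
      | false =>
        rw [hw₀] at htake
        simp [List.replicate_succ] at htake
    · exfalso
      simp only [List.length_cons, List.length_append, hlen0, List.length_singleton] at hlenle
      omega
    · exfalso
      rw [hyw] at hlenle
      simp only [List.length_cons, List.length_append, hlen0, List.length_singleton] at hlenle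
      omega
    · subst hy'
      exact hpre.eq_of_length (by simp [hlen0])
  -- suffix code via θ
  have hsc : isSuffixCodeL X := by
    intro x hx y hy hsuf
    obtain ⟨t, rfl⟩ := hsuf
    have h1 : θ x <+: θ (t ++ x) := ⟨θ t, (hθanti t x).symm⟩
    have h2 := hpc (θ x) (hθX ⟨x, hx, rfl⟩) (θ (t ++ x)) (hθX ⟨_, hy, rfl⟩) h1
    have h3 := congrArg θ h2
    rw [hθinv, hθinv] at h3
    exact h3
  -- the long uniform word is in X
  have hAn : replicate (K + 1) true ∈ X := by
    refine (hmem _).mpr (Or.inl ⟨by simp, ?_, ?_⟩)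
    · rintro ⟨c, hc⟩
      have h := congrArg (List.count false) hc
      cases c <;> simp [List.count_replicate, List.count_cons, hcf] at h
    · rintro ⟨c, hc⟩
      have h := congrArg (List.count false) hc
      cases c <;>
        simp [List.count_replicate, List.count_append, List.count_cons, hcf] at h
  -- trichotomy for words of length K+1
  have htri : ∀ u : List Bool, u.length = K + 1 →
      u ∈ X ∨ (∃ c, u = c :: w₀) ∨ (∃ d, u = w₀ ++ [d]) := by
    intro u hu
    by_cases h1 : ∃ c, u = c :: w₀
    · exact Or.inr (Or.inl h1)
    by_cases h2 : ∃ c, u = w₀ ++ [c]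
    · exact Or.inr (Or.inr h2)
    · exact Or.inl ((hmem u).mpr (Or.inl ⟨hu, h1, h2⟩))
  -- right completeness by strong induction on length
  have main : ∀ N : ℕ, ∀ w : List Bool, w.length ≤ N → ∃ v, (w ++ v) ∈ wordStar X := by
    intro N
    induction N with
    | zero =>
      intro w hw
      have : w = [] := List.length_eq_zero_iff.mp (Nat.le_zero.mp hw)
      subst this
      exact ⟨[], by simpa using empty_mem_star X⟩
    | succ N ih =>
      intro w hw
      by_cases hlong : K + 1 ≤ w.length
      · have hsplit := (List.take_append_drop (K + 1) w).symm
        have hu : (w.take (K + 1)).length = K + 1 := by rw [List.length_take]; omega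
        rcases htri _ hu with hXu | ⟨c, hc⟩ | ⟨d, hd⟩
        · obtain ⟨v, hv⟩ := ih (w.drop (K + 1)) (by rw [List.length_drop]; omega)
          refine ⟨v, ?_⟩
          rw [hsplit, List.append_assoc]
          exact cons_mem_star hXu hv
        · rcases Nat.lt_or_ge (K + 1) w.length with hgt | hge
          · have hdropne : w.drop (K + 1) ≠ [] := by
              intro h
              have := congrArg List.length h
              rw [List.length_drop] at this
              simp at this
              omega
            obtain ⟨d, r, hr⟩ := List.exists_cons_of_ne_nil hdropne
            obtain ⟨v, hv⟩ := ih r (by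
              have := congrArg List.length hr
              rw [List.length_drop] at this
              simp at this
              omega)
            refine ⟨v, ?_⟩
            have heq2 : w ++ v = (c :: (w₀ ++ [d])) ++ (r ++ v) := by
              conv_lhs => rw [hsplit]
              rw [hc, hr]
              simp
            rw [heq2]
            exact cons_mem_star (S3X c d) hv
          · have hwu : w = c :: w₀ := by
              have h := List.take_of_length_le (by omega : w.length ≤ K + 1)
              rw [← h, hc]
            refine ⟨[true], ?_⟩
            rw [hwu, show (c :: w₀) ++ [true] = c :: (w₀ ++ [true]) by simp]
            exact single_mem_star (S3X c true)
        · have hpre2 : w₀ ++ [d] <+: w := hd ▸ List.take_prefix _ w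
          obtain ⟨t, ht⟩ := hpre2
          obtain ⟨v, hv⟩ := ih ([d] ++ t) (by
            have := congrArg List.length ht
            simp [hlen0] at this
            simp
            omega)
          refine ⟨v, ?_⟩
          rw [← ht, show ((w₀ ++ [d]) ++ t) ++ v = w₀ ++ (([d] ++ t) ++ v) by simp]
          exact cons_mem_star w0X hv
      · -- short words: length ≤ K
        set m : ℕ := K + 1 - w.length with hm
        have hm1 : 1 ≤ m := by omega
        have hu : (w ++ List.replicate m true).length = K + 1 := by simp; omega
        rcases htri _ hu with hXu | ⟨c, hc⟩ | ⟨d, hd⟩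
        · exact ⟨_, single_mem_star hXu⟩
        · exfalso
          obtain ⟨m', hm'⟩ : ∃ m', m = m' + 1 := ⟨m - 1, by omega⟩
          have h1 : w ++ replicate m true = (w ++ replicate m' true) ++ [true] := by
            rw [hm', List.replicate_succ' (n := m') (a := true)]
            simp
          have h2 : c :: w₀ =
              (c :: (replicate (k' + 1) true ++ replicate k' false)) ++ [false] := by
            rw [hw₀, List.replicate_succ' (n := k') (a := false)]
            simp
          rw [h1, h2] at hc
          have h3 := congrArg List.getLast? hc
          rw [List.getLast?_concat, List.getLast?_concat] at h3
          simp at h3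
        · have hwpre : w <+: w₀ := by
            have h1 : w <+: w₀ ++ [d] := hd ▸ List.prefix_append w _
            exact List.prefix_of_prefix_length_le h1 (List.prefix_append w₀ [d])
              (by rw [hlen0]; omega)
          obtain ⟨t, ht⟩ := hwpre
          exact ⟨t, ht ▸ single_mem_star w0X⟩
  refine ⟨?_, ?_, ?_, hpc, hsc, ?_, hθX⟩
  · -- finite
    apply (List.finite_length_le Bool (K + 2)).subset
    intro w hw
    rcases hlens w hw with h | h | h <;> simp only [Set.mem_setOf_eq] <;> omega
  · -- non-uniform
    rintro ⟨m, hm⟩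
    have h1 := hm w₀ w0X
    have h2 := hm _ hAn
    rw [hlen0] at h1
    simp at h2
    omega
  · -- code
    refine code_of_prefixCode ?_ hpc
    intro h
    have := hlens [] h
    simp at this
  · -- complete
    intro w
    obtain ⟨v, hv⟩ := main w.length w le_rfl
    exact ⟨[], v, by simpa using hv⟩
end

section
/- Let A = {a,b} and θ the anti-automorphism exchanging a and b. The set X = {a², ab, a²b, ab², b²} is a finite complete θ-invariant code which is neither prefix nor suffix. -/
open List

def Xd : Set (List Bool) :=
  {[true, true], [true, false], [true, true, false],
   [true, false, false], [false, false]}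

lemma memXd {x : List Bool} :
    x ∈ Xd ↔ x = [true, true] ∨ x = [true, false] ∨ x = [true, true, false] ∨
      x = [true, false, false] ∨ x = [false, false] := by
  simp [Xd, Set.mem_insert_iff]

lemma star_append {A : Type*} {S : Set (List A)} {u v : List A}
    (hu : u ∈ wordStar S) (hv : v ∈ wordStar S) : u ++ v ∈ wordStar S := by
  obtain ⟨l, hl, hlf⟩ := hu
  obtain ⟨m, hm, hmf⟩ := hv
  exact ⟨l ++ m, by intro x hx; rcases List.mem_append.1 hx with h|h; exacts [hl x h, hm x h],
    by simp [hlf, hmf]⟩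

lemma star_single {A : Type*} {S : Set (List A)} {x : List A} (hx : x ∈ S) :
    x ∈ wordStar S := ⟨[x], by simpa using hx, by simp⟩

lemma rep_a_even : ∀ s, List.replicate (2*s) true ∈ wordStar Xd := by
  intro s
  induction s with
  | zero => exact ⟨[], by simp⟩
  | succ n ih =>
      have : 2*(n+1) = 2*n + 2 := by ring
      rw [this, List.replicate_add]
      exact star_append ih (star_single (by simp [memXd]))

lemma rep_b_even : ∀ s, List.replicate (2*s) false ∈ wordStar Xd := by
  intro s
  induction s with
  | zero => exact ⟨[], by simp⟩
  | succ n ih =>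
      have : 2*(n+1) = 2*n + 2 := by ring
      rw [this, List.replicate_add]
      exact star_append ih (star_single (by simp [memXd]))

lemma block : ∀ p q, 1 ≤ p → 1 ≤ q →
    List.replicate p true ++ List.replicate q false ∈ wordStar Xd := by
  intro p q hp hq
  obtain ⟨s, r, hr, hpr⟩ : ∃ s r, (r = 1 ∨ r = 2) ∧ p = 2*s + r := by
    rcases Nat.even_or_odd p with ⟨s, hs⟩ | ⟨s, hs⟩
    · exact ⟨s - 1, 2, Or.inr rfl, by omega⟩
    · exact ⟨s, 1, Or.inl rfl, by omega⟩
  obtain ⟨t, e, he, hqe⟩ : ∃ t e, (e = 1 ∨ e = 2) ∧ q = e + 2*t := by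
    rcases Nat.even_or_odd q with ⟨t, ht⟩ | ⟨t, ht⟩
    · exact ⟨t - 1, 2, Or.inr rfl, by omega⟩
    · exact ⟨t, 1, Or.inl rfl, by omega⟩
  subst hpr hqe
  rw [List.replicate_add, List.replicate_add]
  have core : List.replicate r true ++ List.replicate e false ∈ wordStar Xd := by
    rcases hr with rfl | rfl <;> rcases he with rfl | rfl
    · exact star_single (by simp [memXd])
    · exact star_single (by simp [memXd])
    · exact star_single (by simp [memXd])
    · exact star_append (star_single (show [true,true] ∈ Xd by simp [memXd]))
        (star_single (show [false,false] ∈ Xd by simp [memXd]))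
  have := star_append (rep_a_even s) (star_append core (rep_b_even t))
  simpa only [List.append_assoc] using this

lemma PQ : ∀ n (w : List Bool), w.length ≤ n →
    (∀ p, 1 ≤ p → List.replicate p true ++ w ++ [false] ∈ wordStar Xd) ∧
    (∀ p q, 1 ≤ p → 1 ≤ q →
      List.replicate p true ++ (List.replicate q false ++ (w ++ [false])) ∈ wordStar Xd) := by
  intro n
  induction n with
  | zero =>
      intro w hw
      have : w = [] := List.length_eq_zero_iff.1 (Nat.le_zero.1 hw)
      subst this
      constructor
      · intro p hp
        simpa using block p 1 hp (by norm_num)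
      · intro p q hp hq
        have := block p (q+1) hp (by omega)
        simpa [List.replicate_succ', List.append_assoc] using this
  | succ n ih =>
      intro w hw
      match w with
      | [] =>
          constructor
          · intro p hp
            simpa using block p 1 hp (by norm_num)
          · intro p q hp hq
            have := block p (q+1) hp (by omega)
            simpa [List.replicate_succ', List.append_assoc] using this
      | c :: u =>
          have hu : u.length ≤ n := by simpa using Nat.succ_le_succ_iff.1 (by simpa using hw)
          obtain ⟨IH1, IH2⟩ := ih u hu
          constructor
          · intro p hp
            cases c with
            | true =>
                have := IH1 (p+1) (by omega)
                rw [List.replicate_succ'] at this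
                simpa [List.append_assoc] using this
            | false =>
                have := IH2 p 1 hp le_rfl
                simpa [List.append_assoc] using this
          · intro p q hp hq
            cases c with
            | false =>
                have := IH2 p (q+1) hp (by omega)
                rw [List.replicate_succ'] at this
                simpa [List.append_assoc] using this
            | true =>
                have h1 := block p q hp hq
                have h2 := IH1 1 le_rfl
                have := star_append h1 h2
                simpa [List.append_assoc] using this

lemma noshift : ∀ N (l m : List (List Bool)), (∀ w ∈ l, w ∈ Xd) → (∀ w ∈ m, w ∈ Xd) →
    l.flatten.length ≤ N → l.flatten = false :: m.flatten → False := by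
  intro N
  induction N with
  | zero =>
      intro l m _ _ hlen h
      rw [h] at hlen; simp at hlen
  | succ n ih =>
      intro l m hl hm hlen h
      match l with
      | [] => simp at h
      | x :: l' =>
          have hx := hl x (List.mem_cons_self)
          rcases memXd.1 hx with rfl | rfl | rfl | rfl | rfl <;> simp at h
          · have hl' : ∀ w ∈ l', w ∈ Xd := fun w hw => hl w (List.mem_cons_of_mem _ hw)
            apply ih m l' hm hl'
            · have h2 := congrArg List.length h
              simp at h2 hlen ⊢
              omega
            · simp [← h]

lemma codeXd : ∀ (l m : List (List Bool)), (∀ w ∈ l, w ∈ Xd) → (∀ w ∈ m, w ∈ Xd) →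
    l.flatten = m.flatten → l = m := by
  intro l
  induction l with
  | nil =>
      intro m _ hm h
      cases m with
      | nil => rfl
      | cons y m' =>
          exfalso
          rcases memXd.1 (hm y (List.mem_cons_self)) with rfl|rfl|rfl|rfl|rfl <;> simp at h
  | cons x l' ih =>
      intro m hl hm h
      cases m with
      | nil =>
          exfalso
          rcases memXd.1 (hl x (List.mem_cons_self)) with rfl|rfl|rfl|rfl|rfl <;> simp at h
      | cons y m' =>
          have hl' : ∀ w ∈ l', w ∈ Xd := fun w hw => hl w (List.mem_cons_of_mem _ hw)
          have hm' : ∀ w ∈ m', w ∈ Xd := fun w hw => hm w (List.mem_cons_of_mem _ hw)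
          rcases memXd.1 (hl x (List.mem_cons_self)) with rfl|rfl|rfl|rfl|rfl <;>
            rcases memXd.1 (hm y (List.mem_cons_self)) with rfl|rfl|rfl|rfl|rfl <;>
            simp at h <;>
            first
              | (rw [ih m' hl' hm' h])
              | exact (noshift l'.flatten.length l' m' hl' hm' le_rfl h).elim
              | exact (noshift l'.flatten.length l' m' hl' hm' le_rfl h.symm).elim
              | exact (noshift m'.flatten.length m' l' hm' hl' le_rfl h).elim
              | exact (noshift m'.flatten.length m' l' hm' hl' le_rfl h.symm).elim

/-- Over `A = {a, b}` (here `a = true`, `b = false`) with θ the anti-automorphism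
exchanging the letters, `X = {a², ab, a²b, ab², b²}` is a finite complete
θ-invariant code which is neither prefix nor suffix. -/
theorem stmt11 (θ : List Bool → List Bool)
    (hθ : θ = fun w => (w.reverse).map (fun c => !c))
    (X : Set (List Bool))
    (hX : X = {[true, true], [true, false], [true, true, false],
               [true, false, false], [false, false]}) :
    X.Finite ∧ isCodeL X ∧ isCompleteL X ∧ θ '' X ⊆ X ∧
    ¬ isPrefixCodeL X ∧ ¬ isSuffixCodeL X := by
  have hXd : X = Xd := hX
  subst hθ
  refine ⟨?_, ?_, ?_, ?_, ?_, ?_⟩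
  · rw [hX]
    exact Set.toFinite _
  · rw [hXd]
    exact codeXd
  · intro w
    refine ⟨[true], [false], ?_⟩
    rw [hXd]
    simpa using (PQ w.length w le_rfl).1 1 le_rfl
  · rintro y ⟨x, hx, rfl⟩
    rw [hXd] at hx ⊢
    rcases memXd.1 hx with rfl|rfl|rfl|rfl|rfl <;> simp [memXd]
  · intro h
    have := h [true, true] (by rw [hX]; simp) [true, true, false] (by rw [hX]; simp)
      ⟨[false], rfl⟩
    simp at this
  · intro h
    have := h [false, false] (by rw [hX]; simp) [true, false, false] (by rw [hX]; simp)
      ⟨[true], rfl⟩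
    simp at this
end

section
/- Let A = {a,b} and let θ be the mirror anti-automorphism (θ(a)=a, θ(b)=b, θ reverses words). The θ-invariant bifix code X = {aa, b} cannot be embedded in any finite complete bifix code over A: there is no finite complete bifix code Z with X ⊆ Z. -/
open List

lemma flatten_split {α : Type*} (x : α) :
    ∀ (l : List (List α)) (P S : List α), l.flatten = P ++ x :: S →
    ∃ l1 z l2 p s, l = l1 ++ z :: l2 ∧ z = p ++ x :: s ∧
      l1.flatten ++ p = P ∧ s ++ l2.flatten = S := by
  intro l
  induction l with
  | nil =>
    intro P S h
    exact absurd h.symm (by simp)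
  | cons w t ih =>
    intro P S h
    rw [flatten_cons] at h
    rcases le_or_gt w.length P.length with hle | hlt
    · have hw : w = P.take w.length := by
        have := congrArg (List.take w.length) h
        rwa [take_append_of_le_length hle, take_left] at this
      have ht : t.flatten = P.drop w.length ++ x :: S := by
        have := congrArg (List.drop w.length) h
        rwa [drop_append_of_le_length hle, drop_left] at this
      obtain ⟨l1, z, l2, p, s, h1, h2, h3, h4⟩ := ih _ _ ht
      refine ⟨w :: l1, z, l2, p, s, by rw [h1]; rfl, h2, ?_, h4⟩
      rw [flatten_cons, append_assoc, h3]
      nth_rewrite 1 [hw]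
      exact take_append_drop w.length P
    · have h1 : w.take P.length = P := by
        have := congrArg (List.take P.length) h
        rwa [take_append_of_le_length hlt.le, take_left' rfl] at this
      have h2 : w[P.length]? = some x := by
        have := congrArg (fun l => l[P.length]?) h
        rwa [getElem?_append_left hlt, getElem?_append_right (le_refl _),
          Nat.sub_self, getElem?_cons_zero] at this
      refine ⟨[], w, t, P, w.drop (P.length + 1), rfl, ?_, by simp, ?_⟩
      · conv_lhs => rw [← List.take_append_drop P.length w]
        rw [List.drop_eq_getElem_cons hlt, h1]
        have h2' := List.getElem?_eq_getElem hlt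
        rw [h2', Option.some.injEq] at h2
        rw [h2]
      · have hL : (w ++ t.flatten).drop (P.length+1) = w.drop (P.length+1) ++ t.flatten := by
          rw [drop_append, Nat.sub_eq_zero_of_le hlt, drop_zero]
        have hR : (P ++ x :: S).drop (P.length+1) = S := by
          rw [drop_append, drop_of_length_le (Nat.le_succ _),
            show P.length + 1 - P.length = 1 by omega]
          simp
        rw [← hL, h, hR]

lemma prefixCode_isCode {A : Type*} {X : Set (List A)} (hpre : isPrefixCodeL X)
    (hnil : [] ∉ X) : isCodeL X := by
  intro l
  induction l with
  | nil =>
    intro m _ hm h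
    cases m with
    | nil => rfl
    | cons w m' =>
      exfalso
      have : w = [] := (flatten_eq_nil_iff.mp h.symm) w (by simp)
      exact hnil (this ▸ hm w (by simp))
  | cons w l ih =>
    intro m hl hm h
    cases m with
    | nil =>
      exfalso
      have : w = [] := (flatten_eq_nil_iff.mp h) w (by simp)
      exact hnil (this ▸ hl w (by simp))
    | cons w' m' =>
      rw [flatten_cons, flatten_cons] at h
      have hww' : w = w' := by
        rcases List.append_eq_append_iff.mp h with ⟨a, ha, _⟩ | ⟨c, hc, _⟩
        · exact hpre w (hl w (by simp)) w' (hm w' (by simp)) ⟨a, ha.symm⟩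
        · exact (hpre w' (hm w' (by simp)) w (hl w (by simp)) ⟨c, hc.symm⟩).symm
      subst hww'
      rw [ih m' (fun x hx => hl x (by simp [hx])) (fun x hx => hm x (by simp [hx]))
        (append_cancel_left h)]

/-- Over `A = {a, b}` (here `a = true`, `b = false`) with the mirror
anti-automorphism θ (word reversal), the θ-invariant bifix code `X = {aa, b}`
cannot be embedded into any finite complete bifix code. -/
theorem stmt13 (θ : List Bool → List Bool) (hθ : θ = fun w => w.reverse)
    (X : Set (List Bool)) (hX : X = {[true, true], [false]}) :
    (θ '' X ⊆ X ∧ isCodeL X ∧ isPrefixCodeL X ∧ isSuffixCodeL X) ∧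
    ¬ ∃ Z : Set (List Bool), Z.Finite ∧ isCodeL Z ∧ isPrefixCodeL Z ∧
        isSuffixCodeL Z ∧ isCompleteL Z ∧ X ⊆ Z := by
  subst hθ hX
  have hpreX : isPrefixCodeL ({[true, true], [false]} : Set (List Bool)) := by
    intro x hx y hy hp
    rcases hx with rfl | rfl <;> rcases hy with rfl | rfl <;>
      first | rfl | exact absurd hp (by decide)
  have hsufX : isSuffixCodeL ({[true, true], [false]} : Set (List Bool)) := by
    intro x hx y hy hp
    rcases hx with rfl | rfl <;> rcases hy with rfl | rfl <;>
      first | rfl | exact absurd hp (by decide)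
  refine ⟨⟨?_, prefixCode_isCode hpreX (by simp), hpreX, hsufX⟩, ?_⟩
  · rintro y ⟨x, hx, rfl⟩
    rcases hx with rfl | rfl <;> simp
  · rintro ⟨Z, hfin, hcode, hpre, hsuf, hcomp, hsub⟩
    have haa : [true, true] ∈ Z := hsub (by simp)
    have hb : [false] ∈ Z := hsub (by simp)
    obtain ⟨N, hN⟩ : ∃ N, ∀ z ∈ Z, z.length ≤ N := by
      obtain ⟨N, hN⟩ := (hfin.image List.length).bddAbove
      exact ⟨N, fun z hz => hN ⟨z, hz, rfl⟩⟩
    obtain ⟨u, v, l, hl, hfl⟩ := hcomp (replicate N false ++ [true] ++ replicate N false)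
    have hfl' : l.flatten = (u ++ replicate N false) ++ true :: (replicate N false ++ v) := by
      rw [hfl]; simp
    obtain ⟨l1, z, l2, p, s, hsplit, hz, hP, hS⟩ := flatten_split true l _ _ hfl'
    have hzZ : z ∈ Z := hl z (by rw [hsplit]; simp)
    have hzlen : z.length ≤ N := hN z hzZ
    have hlen : p.length + s.length + 1 ≤ N := by
      have : z.length = p.length + s.length + 1 := by simp [hz]; omega
      omega
    -- p consists of falses
    have hp : p = replicate p.length false := by
      have hKlen : l1.flatten.length + p.length = u.length + N := by
        have := congrArg List.length hP
        simpa using this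
      have hge : u.length ≤ l1.flatten.length := by omega
      have := congrArg (List.drop l1.flatten.length) hP
      rwa [drop_left, drop_append, drop_of_length_le hge,
        drop_replicate, nil_append, show N - (l1.flatten.length - u.length) = p.length by omega]
        at this
    -- s consists of falses
    have hs : s = replicate s.length false := by
      have := congrArg (List.take s.length) hS
      rwa [take_left, take_append, take_replicate,
        Nat.sub_eq_zero_of_le (by simp; omega), take_zero, append_nil,
        show min s.length N = s.length by omega] at this
    have htz : true ∈ z := by rw [hz]; simp
    cases s with
    | cons c s' =>
      have hsuffix : [false] <:+ z := by
        have h1 : [false] <:+ (c :: s') := by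
          rw [hs, length_cons, replicate_succ']
          exact suffix_append _ _
        exact h1.trans ⟨p ++ [true], by rw [hz]; simp⟩
      have := hsuf [false] hb z hzZ hsuffix
      rw [← this] at htz
      simp at htz
    | nil =>
      cases p with
      | cons c p' =>
        have hprefix : [false] <+: z := by
          have h1 : [false] <+: (c :: p') := by
            rw [hp, length_cons, replicate_succ]
            exact ⟨replicate p'.length false, rfl⟩
          exact h1.trans ⟨[true], hz.symm⟩
        have := hpre [false] hb z hzZ hprefix
        rw [← this] at htz
        simp at htz
      | nil =>
        have hz1 : z = [true] := by simp [hz]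
        have := hpre z hzZ [true, true] haa (by rw [hz1]; decide)
        rw [hz1] at this
        exact absurd this (by decide)
end

section
/- Let X ⊆ A* be a non-complete θ-invariant code, y ∉ F(X*) a word whose first and last letters differ, z = \bar{a}^{|y|} y a^{|y|} where y ∈ aA*\bar{a} with a ≠ \bar{a}, and Z = ⋃_{i∈ℤ} {θⁱ(z)}. If u, v ∈ A⁺ and i, j ∈ ℤ satisfy θⁱ(z)v = uθʲ(z) with |u| ≤ |z| − 1, then |u| = |v| ≥ 2|y|, and there exist a letter b and a unique integer k with 1 ≤ k ≤ |y| such that θⁱ(z) = u b^k and θʲ(z) = b^k v. -/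
open List

section Aux

variable {A : Type*}

lemma isAAA_id : isAAA (id : List A → List A) :=
  ⟨Function.bijective_id, rfl, Or.inl fun _ _ => rfl⟩

lemma isAAA_comp {f g : List A → List A} (hf : isAAA f) (hg : isAAA g) :
    isAAA (f ∘ g) := by
  obtain ⟨hfb, hfe, hf2⟩ := hf
  obtain ⟨hgb, hge, hg2⟩ := hg
  refine ⟨hfb.comp hgb, by simp [Function.comp, hge, hfe], ?_⟩
  rcases hf2 with hf2 | hf2 <;> rcases hg2 with hg2 | hg2
  · exact Or.inl fun u v => by simp [Function.comp, hg2, hf2]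
  · exact Or.inr fun u v => by simp [Function.comp, hg2, hf2]
  · exact Or.inr fun u v => by simp [Function.comp, hg2, hf2]
  · exact Or.inl fun u v => by simp [Function.comp, hg2, hf2]

lemma isAAA_symm (g : Equiv.Perm (List A)) (hg : isAAA ⇑g) : isAAA ⇑g.symm := by
  obtain ⟨hb, he, h2⟩ := hg
  refine ⟨g.symm.bijective, (Equiv.symm_apply_eq g).mpr he.symm, ?_⟩
  rcases h2 with h | h
  · exact Or.inl fun u v => g.injective <| by
      rw [Equiv.apply_symm_apply, h, Equiv.apply_symm_apply, Equiv.apply_symm_apply]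
  · exact Or.inr fun u v => g.injective <| by
      rw [Equiv.apply_symm_apply, h, Equiv.apply_symm_apply, Equiv.apply_symm_apply]

lemma aaa_le (g : Equiv.Perm (List A)) (hg : isAAA ⇑g) :
    ∀ w : List A, w.length ≤ (g w).length := by
  intro w
  induction w with
  | nil => simp
  | cons x t ih =>
    have hx : g [x] ≠ [] := by
      intro h
      have := g.injective (h.trans hg.2.1.symm)
      simp at this
    have hx1 : 1 ≤ (g [x]).length := length_pos_iff.mpr hx
    have hco : g (x :: t) = g [x] ++ g t ∨ g (x :: t) = g t ++ g [x] := by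
      rcases hg.2.2 with h | h
      · exact Or.inl (by rw [← h]; rfl)
      · exact Or.inr (by rw [← h]; rfl)
    rcases hco with h | h <;> rw [h, length_append, length_cons] <;> omega

lemma aaa_length (g : Equiv.Perm (List A)) (hg : isAAA ⇑g) (w : List A) :
    (g w).length = w.length := by
  have h1 := aaa_le g hg w
  have h2 := aaa_le g.symm (isAAA_symm g hg) (g w)
  rw [Equiv.symm_apply_apply] at h2
  omega

lemma aaa_letter (g : Equiv.Perm (List A)) (hg : isAAA ⇑g) (x : A) :
    ∃ c, g [x] = [c] := by
  have h := aaa_length g hg [x]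
  cases hgx : g [x] with
  | nil => rw [hgx] at h; simp at h
  | cons c t =>
    rw [hgx] at h
    cases t with
    | nil => exact ⟨c, rfl⟩
    | cons d t' => simp only [length_cons, length_nil] at h; omega

lemma aaa_replicate (g : Equiv.Perm (List A)) (hg : isAAA ⇑g) {x c : A}
    (hxc : g [x] = [c]) : ∀ k, g (replicate k x) = replicate k c := by
  intro k
  induction k with
  | zero => simpa using hg.2.1
  | succ k ih =>
    have hsp : replicate (k + 1) x = [x] ++ replicate k x := rfl
    rcases hg.2.2 with h | h
    · rw [hsp, h, hxc, ih]; rfl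
    · rw [hsp, h, hxc, ih, ← replicate_succ']

def GoodW (n : ℕ) (w : List A) : Prop :=
  ∃ b c : A, b ≠ c ∧ ∃ m : List A, m.length = n ∧ m.head? = some b ∧
    m.getLast? = some c ∧ w = replicate n c ++ m ++ replicate n b

lemma goodW_map (g : Equiv.Perm (List A)) (hg : isAAA ⇑g) {n : ℕ} {w : List A}
    (h : GoodW n w) : GoodW n (g w) := by
  obtain ⟨b, c, hbc, m, hm, hh, hl, rfl⟩ := h
  obtain ⟨b', hb'⟩ := aaa_letter g hg b
  obtain ⟨c', hc'⟩ := aaa_letter g hg c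
  have hbc' : b' ≠ c' := by
    intro hE
    have hbceq : ([b] : List A) = [c] := g.injective (by rw [hb', hc', hE])
    exact hbc (by simpa using hbceq)
  -- decompose m
  have hm0 : m ≠ [] := by rintro rfl; simp at hh
  obtain ⟨t, ht⟩ : ∃ t, m = b :: t := by
    cases m with
    | nil => simp at hh
    | cons x t =>
      simp only [head?_cons, Option.some_inj] at hh
      exact ⟨t, by rw [hh]⟩
  have hlast : m.dropLast ++ [c] = m := by
    have h1 := getLast?_eq_getLast hm0
    rw [hl] at h1
    have h2 : m.getLast hm0 = c := by
      injection h1.symm with h2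
    rw [← h2]
    exact dropLast_append_getLast hm0
  have hglen : (g m).length = n := by rw [aaa_length g hg, hm]
  rcases hg.2.2 with hmor | hanti
  · -- morphism
    have hgw : g (replicate n c ++ m ++ replicate n b)
        = replicate n c' ++ g m ++ replicate n b' := by
      rw [hmor, hmor, aaa_replicate g hg hc', aaa_replicate g hg hb']
    have hhead' : (g m).head? = some b' := by
      have : g m = [b'] ++ g t := by
        rw [ht, show b :: t = [b] ++ t from rfl, hmor, hb']
      rw [this]; rfl
    have hlast' : (g m).getLast? = some c' := by
      have : g m = g m.dropLast ++ [c'] := by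
        conv_lhs => rw [← hlast]
        rw [hmor, hc']
      rw [this, getLast?_concat]
    exact ⟨b', c', hbc', g m, hglen, hhead', hlast', hgw⟩
  · -- antimorphism
    have hgw : g (replicate n c ++ m ++ replicate n b)
        = replicate n b' ++ g m ++ replicate n c' := by
      rw [hanti, hanti, aaa_replicate g hg hc', aaa_replicate g hg hb', append_assoc]
    have hhead' : (g m).head? = some c' := by
      have : g m = [c'] ++ g m.dropLast := by
        conv_lhs => rw [← hlast]
        rw [hanti, hc']
      rw [this]; rfl
    have hlast' : (g m).getLast? = some b' := by
      have : g m = g t ++ [b'] := by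
        rw [ht, show b :: t = [b] ++ t from rfl, hanti, hb']
      rw [this, getLast?_concat]
    exact ⟨c', b', hbc'.symm, g m, hglen, hhead', hlast', hgw⟩

lemma isAAA_zpow (θ : Equiv.Perm (List A)) (hθ : isAAA ⇑θ) (i : ℤ) :
    isAAA ⇑(θ ^ i) := by
  induction i using Int.induction_on with
  | zero => simpa using isAAA_id
  | succ k ih =>
    have : θ ^ ((k : ℤ) + 1) = θ ^ (k : ℤ) * θ := by rw [zpow_add_one]
    rw [this, Equiv.Perm.coe_mul]
    exact isAAA_comp ih hθ
  | pred k ih =>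
    have : θ ^ (-(k : ℤ) - 1) = θ ^ (-(k : ℤ)) * θ⁻¹ := by rw [zpow_sub_one]
    rw [this, Equiv.Perm.coe_mul]
    have : (θ⁻¹ : Equiv.Perm (List A)) = θ.symm := rfl
    rw [this]
    exact isAAA_comp ih (isAAA_symm θ hθ)

-- index lemmas
lemma good_getA {n : ℕ} {b c : A} {m : List A} (hm : m.length = n) {p : ℕ}
    (hp : p < n) : (replicate n c ++ m ++ replicate n b)[p]? = some c := by
  rw [getElem?_append_left (by simp [hm]; omega : p < (replicate n c ++ m).length),
    getElem?_append_left (by simp; omega : p < (replicate n c).length),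
    getElem?_replicate, if_pos hp]

lemma good_getB {n : ℕ} {b c : A} {m : List A} (hm : m.length = n) {p : ℕ}
    (h1 : 2 * n ≤ p) (h2 : p < 3 * n) :
    (replicate n c ++ m ++ replicate n b)[p]? = some b := by
  rw [getElem?_append_right (by simp [hm]; omega : (replicate n c ++ m).length ≤ p),
    getElem?_replicate, if_pos (by simp [hm]; omega)]

lemma good_getC {n : ℕ} {b b0 c : A} {m : List A} (hm : m.length = n)
    (hh : m.head? = some b0) (hn : 0 < n) :
    (replicate n c ++ m ++ replicate n b)[n]? = some b0 := by
  rw [getElem?_append_left (by simp [hm]; omega : n < (replicate n c ++ m).length),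
    getElem?_append_right (by simp : (replicate n c).length ≤ n)]
  simp only [length_replicate, Nat.sub_self]
  rw [← head?_eq_getElem?, hh]

end Aux

/-- Overlap lemma for `Z = {θⁱ(z) : i ∈ ℤ}`, where `z = ā^{|y|} y a^{|y|}` is
built from a word `y ∉ F(X*)` starting with `a` and ending with `ā ≠ a`:
if `θⁱ(z) v = u θʲ(z)` with `u, v` nonempty and `|u| ≤ |z| - 1`, then
`|u| = |v| ≥ 2|y|` and for a letter `b` and a unique `k` with `1 ≤ k ≤ |y|`
we have `θⁱ(z) = u bᵏ` and `θʲ(z) = bᵏ v`. -/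
theorem stmt15 {A : Type*} (θ : Equiv.Perm (List A)) (hθ : isAAA ⇑θ)
    (X : Set (List A)) (hcode : isCodeL X) (hinv : ⇑θ '' X ⊆ X)
    (hncomp : ¬ isCompleteL X)
    (y : List A) (hy : ∀ u v : List A, u ++ y ++ v ∉ wordStar X)
    (a abar : A) (hhead : y.head? = some a) (hlast : y.getLast? = some abar)
    (hne : a ≠ abar)
    (z : List A) (hz : z = List.replicate y.length abar ++ y ++ List.replicate y.length a) :
    ∀ (u v : List A) (i j : ℤ), u ≠ [] → v ≠ [] → u.length ≤ z.length - 1 →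
      (θ ^ i) z ++ v = u ++ (θ ^ j) z →
      u.length = v.length ∧ 2 * y.length ≤ u.length ∧
      ∃ b : A, ∃! k : ℕ, 1 ≤ k ∧ k ≤ y.length ∧
        (θ ^ i) z = u ++ List.replicate k b ∧ (θ ^ j) z = List.replicate k b ++ v := by
  intro u v i j hu hv hule heq
  set n := y.length with hn
  have hn1 : 1 ≤ n := by
    cases y with
    | nil => simp at hhead
    | cons _ _ => simp [hn]
  have hgz : GoodW n z := ⟨a, abar, hne, y, rfl, hhead, hlast, hz⟩
  have h1 : GoodW n ((θ ^ i) z) := goodW_map _ (isAAA_zpow θ hθ i) hgz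
  have h2 : GoodW n ((θ ^ j) z) := goodW_map _ (isAAA_zpow θ hθ j) hgz
  set z₁ := (θ ^ i) z with hz₁def
  set z₂ := (θ ^ j) z with hz₂def
  obtain ⟨b₁, c₁, hbc₁, m₁, hm₁, hh₁, hl₁, hw₁⟩ := h1
  obtain ⟨b₂, c₂, hbc₂, m₂, hm₂, hl₂, hg₂, hw₂⟩ := h2
  have hz1l : z₁.length = 3 * n := by
    rw [hw₁]; simp only [length_append, length_replicate, hm₁]; omega
  have hz2l : z₂.length = 3 * n := by
    rw [hw₂]; simp only [length_append, length_replicate, hm₂]; omega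
  have hzl : z.length = 3 * n := by
    rw [hz]; simp only [length_append, length_replicate]; omega
  rw [hzl] at hule
  have hu1 : 1 ≤ u.length := length_pos_iff.mpr hu
  have hv1 : 1 ≤ v.length := length_pos_iff.mpr hv
  have hlen : z₁.length + v.length = u.length + z₂.length := by
    rw [← length_append, heq, length_append]
  have huv : u.length = v.length := by omega
  have hus : u.length ≤ z₁.length := by omega
  set s := z₁.drop u.length with hsdef
  have hu_take : z₁.take u.length = u := by
    have h := congrArg (List.take u.length) heq
    rwa [take_append_of_le_length hus, take_left] at h
  have hz1eq : z₁ = u ++ s := by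
    conv_lhs => rw [← take_append_drop u.length z₁]
    rw [hu_take]
  have hz2eq : z₂ = s ++ v := by
    have h := congrArg (List.drop u.length) heq
    rw [drop_append_of_le_length hus, drop_left] at h
    rw [hsdef]
    exact h.symm
  have hsl : s.length = 3 * n - u.length := by rw [hsdef, length_drop, hz1l]
  set k := 3 * n - u.length with hk
  have hukn : u.length + k = 3 * n := by omega
  have hk1 : 1 ≤ k := by omega
  have hst1 : ∀ t, t < k → z₁[u.length + t]? = s[t]? := by
    intro t ht
    rw [hz1eq, getElem?_append_right (by omega : u.length ≤ u.length + t)]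
    congr 1
    omega
  have hst2 : ∀ t, t < k → z₂[t]? = s[t]? := by
    intro t ht
    rw [hz2eq, getElem?_append_left (by omega : t < s.length)]
  have key : ∀ t, t < k → z₁[u.length + t]? = z₂[t]? := fun t ht =>
    (hst1 t ht).trans (hst2 t ht).symm
  have hB₁ : ∀ p, 2 * n ≤ p → p < 3 * n → z₁[p]? = some b₁ := fun p h h' => by
    rw [hw₁]; exact good_getB hm₁ h h'
  have hC₁ : z₁[n]? = some b₁ := by rw [hw₁]; exact good_getC hm₁ hh₁ (by omega)
  have hA₂ : ∀ p, p < n → z₂[p]? = some c₂ := fun p hp => by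
    rw [hw₂]; exact good_getA hm₂ hp
  have hB₂ : ∀ p, 2 * n ≤ p → p < 3 * n → z₂[p]? = some b₂ := fun p h h' => by
    rw [hw₂]; exact good_getB hm₂ h h'
  have hC₂ : z₂[n]? = some b₂ := by rw [hw₂]; exact good_getC hm₂ hl₂ (by omega)
  by_cases hkn : k ≤ n
  · have hs_rep : s = replicate k b₁ := by
      apply ext_getElem?
      intro t
      by_cases ht : t < k
      · rw [← hst1 t ht, hB₁ _ (by omega) (by omega), getElem?_replicate, if_pos ht]
      · have hx1 : s[t]? = none := getElem?_eq_none (by omega)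
        have hx2 : (replicate k b₁)[t]? = none := getElem?_eq_none (by
          rw [length_replicate]; omega)
        rw [hx1, hx2]
    refine ⟨huv, by omega, b₁, k, ⟨hk1, hkn, ?_, ?_⟩, ?_⟩
    · rw [hz1eq, hs_rep]
    · rw [hz2eq, hs_rep]
    · rintro k' ⟨_, _, hk'1, _⟩
      have hL := congrArg List.length hk'1
      rw [hz1l, length_append, length_replicate] at hL
      omega
  · exfalso
    push_neg at hkn
    by_cases h2n : k < 2 * n
    · have e1 := key n (by omega)
      rw [hB₁ _ (by omega) (by omega), hC₂] at e1
      have e2 := key (n - 1) (by omega)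
      rw [hB₁ _ (by omega) (by omega), hA₂ _ (by omega)] at e2
      exact hbc₂ ((Option.some.inj e1).symm.trans (Option.some.inj e2))
    by_cases h2e : k = 2 * n
    · have e1 := key n (by omega)
      rw [hB₁ _ (by omega) (by omega), hC₂] at e1
      have e2 := key 0 (by omega)
      have hun : u.length + 0 = n := by omega
      rw [hun, hC₁, hA₂ 0 (by omega)] at e2
      exact hbc₂ ((Option.some.inj e1).symm.trans (Option.some.inj e2))
    · have e1 := key (k - 1) (by omega)
      rw [hB₁ _ (by omega) (by omega), hB₂ _ (by omega) (by omega)] at e1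
      have e2 := key (k - 2 * n) (by omega)
      have hun : u.length + (k - 2 * n) = n := by omega
      rw [hun, hC₁, hA₂ _ (by omega)] at e2
      exact hbc₂ ((Option.some.inj e1).symm.trans (Option.some.inj e2))
end
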